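/- arXiv:1607.04319 — 7 statements merged into one kernel-verified Lean document; each statement's English description precedes it below -/
import Mathlib

section
/- Let P be a Markov kernel on a measurable space X, let V : X → [0,∞) be measurable, and let γ ∈ (0,1) and K > 0 be constants such that ∫ V(y) P(x,dy) ≤ γ·V(x) + K for every x ∈ X. Let R > 2K/(1−γ), set C = {x ∈ X : V(x) ≤ R}, and suppose there exist ζ ∈ (0,1) and a probability measure ν on X such that P(x,A) ≥ ζ·ν(A) for every x ∈ C and every measurable set A. Then for any ζ₀ ∈ (0,ζ) and any γ₀ ∈ (γ + 2K/R, 1), setting β = ζ₀/K and ζ̄ = max(1 − (ζ − ζ₀), (2 + Rβγ₀)/(2 + Rβ)), one has ζ̄ < 1 and ρ_β(μ₁P, μ₂P) ≤ ζ̄ · ρ_β(μ₁, μ₂) for all probability measures μ₁, μ₂ on X with ∫V dμ₁ < ∞ and ∫V dμ₂ < ∞. -/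
open MeasureTheory ProbabilityTheory ENNReal
open NNReal

lemma coe_mk_le (r : ℝ≥0) {x : ℝ≥0∞} (hx : x ≠ ⊤) (h : (r : ℝ) ≤ x.toReal) :
    (r : ℝ≥0∞) ≤ x := by
  rw [← ENNReal.coe_toNNReal hx, ENNReal.coe_le_coe, ← NNReal.coe_le_coe]
  exact h

lemma posPart_le_aux {X : Type*} [MeasurableSpace X] (p q : Measure X)
    [IsFiniteMeasure p] [IsFiniteMeasure q] :
    (p.toSignedMeasure - q.toSignedMeasure).toJordanDecomposition.posPart ≤ p ∧
    (p.toSignedMeasure - q.toSignedMeasure).toJordanDecomposition.negPart ≤ q := by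
  set s := p.toSignedMeasure - q.toSignedMeasure with hs
  obtain ⟨i, hi₁, hi₂, hi₃, hpos, hneg⟩ := s.toJordanDecomposition_spec
  have happ : ∀ B : Set X, MeasurableSet B → s B = (p B).toReal - (q B).toReal := by
    intro B hB
    rw [hs, VectorMeasure.sub_apply, Measure.toSignedMeasure_apply_measurable hB,
      Measure.toSignedMeasure_apply_measurable hB]
    rfl
  constructor
  · rw [Measure.le_iff]
    intro A hA
    rw [hpos, SignedMeasure.toMeasureOfZeroLE_apply _ hi₂ hi₁ hA]
    refine le_trans (coe_mk_le _ (measure_ne_top p (i ∩ A)) ?_) (measure_mono Set.inter_subset_right)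
    have h2 := happ _ (hi₁.inter hA)
    simp only [NNReal.coe_mk, h2]
    linarith [ENNReal.toReal_nonneg (a := q (i ∩ A))]
  · rw [Measure.le_iff]
    intro A hA
    rw [hneg, SignedMeasure.toMeasureOfLEZero_apply _ hi₃ hi₁.compl hA]
    refine le_trans (coe_mk_le _ (measure_ne_top q (iᶜ ∩ A)) ?_) (measure_mono Set.inter_subset_right)
    have h2 := happ _ (hi₁.compl.inter hA)
    simp only [NNReal.coe_mk, h2]
    linarith [ENNReal.toReal_nonneg (a := p (iᶜ ∩ A))]

lemma tv_le_add {X : Type*} [MeasurableSpace X] (p q : Measure X)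
    [IsFiniteMeasure p] [IsFiniteMeasure q] :
    (p.toSignedMeasure - q.toSignedMeasure).totalVariation ≤ p + q :=
  add_le_add (posPart_le_aux p q).1 (posPart_le_aux p q).2

set_option maxHeartbeats 1000000 in
lemma key_real (γ K R ζ ζ₀ γ₀ β ζbar m e₁ e₂ s₁ s₂ : ℝ)
    (hγ0 : 0 < γ) (hγ1 : γ < 1) (hK : 0 < K) (hR : 2 * K / (1 - γ) < R)
    (hζ0 : 0 < ζ) (hζ1 : ζ < 1) (hζ₀0 : 0 < ζ₀) (hζ₀ζ : ζ₀ < ζ)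
    (hγ₀l : γ + 2 * K / R < γ₀) (hγ₀1 : γ₀ < 1)
    (hβ : β = ζ₀ / K) (hζbar : ζbar = max (1 - (ζ - ζ₀)) ((2 + R * β * γ₀) / (2 + R * β)))
    (hm : 0 ≤ m) (he₁0 : 0 ≤ e₁) (he₂0 : 0 ≤ e₂) (he₁ : e₁ ≤ m) (he₂ : e₂ ≤ m)
    (hs₁0 : 0 ≤ s₁) (hs₂0 : 0 ≤ s₂)
    (hs₁ : R * (m - e₁) ≤ s₁) (hs₂ : R * (m - e₂) ≤ s₂) :
    ζbar < 1 ∧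
      2 * m + β * (γ * (s₁ + s₂) + K * (2 * m)) ≤
        ζbar * ((m + β * s₁) + (m + β * s₂)) + 2 * ζ * min e₁ e₂ := by
  have h1γ : 0 < 1 - γ := by linarith
  have hRpos : 0 < R := lt_trans (div_pos (by linarith) h1γ) hR
  have hβpos : 0 < β := by rw [hβ]; positivity
  have hRβ : 0 < 2 + R * β := by positivity
  have hKβ : K * β = ζ₀ := by rw [hβ]; field_simp
  have h2K : γ * R + 2 * K < γ₀ * R := by
    have := (div_lt_iff₀ hRpos).mp (by linarith [hγ₀l] : 2 * K / R < γ₀ - γ)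
    linarith
  have hfrac1 : (2 + R * β * γ₀) / (2 + R * β) < 1 := by
    rw [div_lt_one hRβ]
    nlinarith [mul_lt_mul_of_pos_left hγ₀1 (mul_pos hRpos hβpos)]
  have hζbar1 : ζbar < 1 := by
    rw [hζbar]; exact max_lt (by linarith) hfrac1
  have hζb1 : 1 - (ζ - ζ₀) ≤ ζbar := by rw [hζbar]; exact le_max_left _ _
  have hζb2 : (2 + R * β * γ₀) / (2 + R * β) ≤ ζbar := by rw [hζbar]; exact le_max_right _ _
  have hζb2' : 2 + R * β * γ₀ ≤ ζbar * (2 + R * β) := by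
    have := (div_le_iff₀ hRβ).mp hζb2
    linarith
  have hγ₀ζbar : γ₀ ≤ ζbar := by
    refine le_trans ?_ hζb2
    rw [le_div_iff₀ hRβ]; nlinarith
  have hγζbar : γ ≤ ζbar := by
    have h0 : 0 < 2 * K / R := by positivity
    linarith
  refine ⟨hζbar1, ?_⟩
  set c := min e₁ e₂ with hc
  have hc1 : c ≤ e₁ := min_le_left _ _
  have hc2 : c ≤ e₂ := min_le_right _ _
  have hc0 : 0 ≤ c := le_min he₁0 he₂0
  have hcm : c ≤ m := le_trans hc1 he₁
  have hee : e₁ + e₂ ≤ m + c := by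
    rcases min_cases e₁ e₂ with ⟨h, _⟩ | ⟨h, _⟩ <;> rw [hc, h] <;> linarith
  have hS : R * (m - c) ≤ s₁ + s₂ := by nlinarith
  have hEm : 2 + 2 * (K * β) - 2 * ζ ≤ 2 * ζbar := by rw [hKβ]; linarith
  have hE0 : 2 + 2 * (K * β) + β * γ * R ≤ ζbar * (2 + R * β) := by
    have h2K' : γ * R + 2 * K ≤ γ₀ * R := h2K.le
    have hk := mul_le_mul_of_nonneg_left h2K' hβpos.le
    linarith [hk, hζb2']
  have P1 : 0 ≤ (β * (ζbar - γ)) * (s₁ + s₂ - R * (m - c)) :=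
    mul_nonneg (mul_nonneg hβpos.le (by linarith)) (by linarith)
  have P2 : 0 ≤ (m - c) * (ζbar * (2 + R * β) - (2 + 2 * (K * β) + β * γ * R)) :=
    mul_nonneg (by linarith) (by linarith)
  have P3 : 0 ≤ c * (2 * ζbar - (2 + 2 * (K * β) - 2 * ζ)) :=
    mul_nonneg hc0 (by linarith)
  nlinarith [P1, P2, P3]


/-- The total variation measure `|μ - ν|` of the difference of two (finite) measures. -/
noncomputable def tvMeasure {X : Type*} [MeasurableSpace X] (μ ν : Measure X) : Measure X := by
  classical
  exact if h : IsFiniteMeasure μ ∧ IsFiniteMeasure ν then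
    (@Measure.toSignedMeasure X _ μ h.1 - @Measure.toSignedMeasure X _ ν h.2).totalVariation
  else 0

/-- The weighted variational distance `ρ_β(μ, ν) = ∫ (1 + β V) d|μ - ν|`. -/
noncomputable def rhoBeta {X : Type*} [MeasurableSpace X] (β : ℝ) (V : X → ℝ)
    (μ ν : Measure X) : ℝ≥0∞ :=
  ∫⁻ x, ENNReal.ofReal (1 + β * V x) ∂(tvMeasure μ ν)

lemma tvMeasure_eq {X : Type*} [MeasurableSpace X] (μ ν : Measure X)
    [h1 : IsFiniteMeasure μ] [h2 : IsFiniteMeasure ν] :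
    tvMeasure μ ν = (μ.toSignedMeasure - ν.toSignedMeasure).totalVariation := by
  unfold tvMeasure
  rw [dif_pos ⟨h1, h2⟩]

set_option maxHeartbeats 4000000 in
/-- Hairer–Mattingly Harris-type contraction theorem. -/
theorem hairer_mattingly_contraction
    {X : Type*} [MeasurableSpace X]
    (P : Kernel X X) [IsMarkovKernel P]
    (V : X → ℝ) (hVmeas : Measurable V) (hVnonneg : ∀ x, 0 ≤ V x)
    (γ K : ℝ) (hγ : γ ∈ Set.Ioo (0:ℝ) 1) (hK : 0 < K)
    (hdrift : ∀ x, ∫⁻ y, ENNReal.ofReal (V y) ∂(P x) ≤ ENNReal.ofReal (γ * V x + K))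
    (R : ℝ) (hR : 2 * K / (1 - γ) < R)
    (ζ : ℝ) (hζ : ζ ∈ Set.Ioo (0:ℝ) 1)
    (ν : Measure X) [IsProbabilityMeasure ν]
    (hminor : ∀ x, V x ≤ R → ∀ A : Set X, MeasurableSet A →
      ENNReal.ofReal ζ * ν A ≤ (P x) A)
    (ζ₀ : ℝ) (hζ₀ : ζ₀ ∈ Set.Ioo 0 ζ)
    (γ₀ : ℝ) (hγ₀ : γ₀ ∈ Set.Ioo (γ + 2 * K / R) 1)
    (β : ℝ) (hβ : β = ζ₀ / K)
    (ζbar : ℝ) (hζbar : ζbar = max (1 - (ζ - ζ₀)) ((2 + R * β * γ₀) / (2 + R * β)))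
    (μ₁ μ₂ : Measure X) [IsProbabilityMeasure μ₁] [IsProbabilityMeasure μ₂]
    (h₁ : ∫⁻ x, ENNReal.ofReal (V x) ∂μ₁ < ⊤)
    (h₂ : ∫⁻ x, ENNReal.ofReal (V x) ∂μ₂ < ⊤) :
    ζbar < 1 ∧
      rhoBeta β V (μ₁.bind (fun x => P x)) (μ₂.bind (fun x => P x)) ≤
        ENNReal.ofReal ζbar * rhoBeta β V μ₁ μ₂ := by
  obtain ⟨hγ0, hγ1⟩ := hγ
  obtain ⟨hζ0, hζ1⟩ := hζ
  obtain ⟨hζ₀0, hζ₀ζ⟩ := hζ₀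
  obtain ⟨hγ₀l, hγ₀1⟩ := hγ₀
  have h1γ : 0 < 1 - γ := by linarith
  have hRpos : 0 < R := lt_trans (div_pos (by linarith) h1γ) hR
  have hβpos : 0 < β := by rw [hβ]; positivity
  have hζbar0 : 0 ≤ ζbar := by
    rw [hζbar]; exact le_trans (by linarith) (le_max_left _ _)
  -- the set C
  have hC : MeasurableSet {x | V x ≤ R} := measurableSet_le hVmeas measurable_const
  set C := {x | V x ≤ R} with hCdef
  -- Jordan decomposition of μ₁ - μ₂
  set s := μ₁.toSignedMeasure - μ₂.toSignedMeasure with hsdef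
  set η := s.toJordanDecomposition.posPart with hηdef
  set θ := s.toJordanDecomposition.negPart with hθdef
  have hηle : η ≤ μ₁ := (posPart_le_aux μ₁ μ₂).1
  have hθle : θ ≤ μ₂ := (posPart_le_aux μ₁ μ₂).2
  have hsrepr : ∀ A : Set X, MeasurableSet A →
      (μ₁ A).toReal - (μ₂ A).toReal = (η A).toReal - (θ A).toReal := by
    intro A hA
    have hx1 : s A = (μ₁ A).toReal - (μ₂ A).toReal := by
      rw [hsdef, VectorMeasure.sub_apply, Measure.toSignedMeasure_apply_measurable hA,
        Measure.toSignedMeasure_apply_measurable hA]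
      rfl
    have hx2 : s A = (η A).toReal - (θ A).toReal := by
      conv_lhs => rw [← s.toSignedMeasure_toJordanDecomposition]
      rw [JordanDecomposition.toSignedMeasure, VectorMeasure.sub_apply,
        Measure.toSignedMeasure_apply_measurable hA, Measure.toSignedMeasure_apply_measurable hA]
      rfl
    linarith
  have hmeq : μ₁ + θ = μ₂ + η := by
    ext A hA
    rw [Measure.add_apply, Measure.add_apply]
    refine (ENNReal.toReal_eq_toReal_iff' (by finiteness) (by finiteness)).mp ?_
    rw [ENNReal.toReal_add (by finiteness) (by finiteness),
      ENNReal.toReal_add (by finiteness) (by finiteness)]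
    linarith [hsrepr A hA]
  have hηθuniv : η Set.univ = θ Set.univ := by
    have h := congrArg (fun μ : Measure X => μ Set.univ) hmeq
    simp only [Measure.add_apply, measure_univ] at h
    exact ((ENNReal.add_right_inj ENNReal.one_ne_top).mp h).symm
  -- bind basics
  have hPmeas : Measurable (fun x => P x) := P.measurable
  have hbind_apply : ∀ (ξ : Measure X) (A : Set X), MeasurableSet A →
      ξ.bind ⇑P A = ∫⁻ x, P x A ∂ξ := fun ξ A hA => Measure.bind_apply hA hPmeas.aemeasurable
  have hbind_univ : ∀ ξ : Measure X, ξ.bind ⇑P Set.univ = ξ Set.univ := by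
    intro ξ
    rw [hbind_apply _ _ MeasurableSet.univ]
    simp [measure_univ]
  have hbfin : ∀ (ξ : Measure X), IsFiniteMeasure ξ → IsFiniteMeasure (ξ.bind ⇑P) := by
    intro ξ hξ
    exact ⟨by rw [hbind_univ]; exact measure_lt_top ξ _⟩
  haveI hfa : IsFiniteMeasure (μ₁.bind ⇑P) := hbfin _ inferInstance
  haveI hfb : IsFiniteMeasure (μ₂.bind ⇑P) := hbfin _ inferInstance
  haveI hfη : IsFiniteMeasure (η.bind ⇑P) := hbfin _ inferInstance
  haveI hfθ : IsFiniteMeasure (θ.bind ⇑P) := hbfin _ inferInstance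
  -- the common part κ
  set ce := min (η C) (θ C) with hcedef
  have hceη : ce ≤ η C := min_le_left _ _
  have hceθ : ce ≤ θ C := min_le_right _ _
  have hcefin : ce ≠ ⊤ := ne_top_of_le_ne_top (measure_ne_top η C) hceη
  set κ := (ENNReal.ofReal ζ * ce) • ν with hκdef
  have hκuniv : κ Set.univ = ENNReal.ofReal ζ * ce := by
    rw [hκdef, Measure.smul_apply, measure_univ, smul_eq_mul, mul_one]
  haveI hκfin : IsFiniteMeasure κ :=
    ⟨by rw [hκuniv]; exact ENNReal.mul_lt_top ENNReal.ofReal_lt_top hcefin.lt_top⟩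
  have hκle : ∀ (ξ : Measure X), ce ≤ ξ C → κ ≤ ξ.bind ⇑P := by
    intro ξ hξC
    rw [Measure.le_iff]
    intro A hA
    rw [hbind_apply ξ A hA, hκdef, Measure.smul_apply, smul_eq_mul]
    have step1 : ENNReal.ofReal ζ * ce * ν A ≤ ENNReal.ofReal ζ * ν A * ξ C := by
      calc ENNReal.ofReal ζ * ce * ν A = ENNReal.ofReal ζ * ν A * ce := by ring
        _ ≤ ENNReal.ofReal ζ * ν A * ξ C := by gcongr
    refine le_trans step1 ?_
    have step2 : ENNReal.ofReal ζ * ν A * ξ C = ∫⁻ x in C, ENNReal.ofReal ζ * ν A ∂ξ := by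
      rw [setLIntegral_const]
    rw [step2]
    refine le_trans (setLIntegral_mono (P.measurable_coe hA) ?_) (setLIntegral_le_lintegral _ _)
    intro x hx
    exact hminor x hx A hA
  -- the measures p and q
  set p := η.bind ⇑P - κ with hpdef
  set q := θ.bind ⇑P - κ with hqdef
  haveI hpfin : IsFiniteMeasure p :=
    ⟨lt_of_le_of_lt (Measure.le_iff'.1 Measure.sub_le Set.univ) (measure_lt_top _ _)⟩
  haveI hqfin : IsFiniteMeasure q :=
    ⟨lt_of_le_of_lt (Measure.le_iff'.1 Measure.sub_le Set.univ) (measure_lt_top _ _)⟩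
  have hpκ : p + κ = η.bind ⇑P := Measure.sub_add_cancel_of_le (hκle η hceη)
  have hqκ : q + κ = θ.bind ⇑P := Measure.sub_add_cancel_of_le (hκle θ hceθ)
  -- signed measure identity
  have hsigned : (μ₁.bind ⇑P).toSignedMeasure - (μ₂.bind ⇑P).toSignedMeasure =
      p.toSignedMeasure - q.toSignedMeasure := by
    ext A hA
    rw [VectorMeasure.sub_apply, VectorMeasure.sub_apply,
      Measure.toSignedMeasure_apply_measurable hA, Measure.toSignedMeasure_apply_measurable hA,
      Measure.toSignedMeasure_apply_measurable hA, Measure.toSignedMeasure_apply_measurable hA]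
    have hbeq : μ₁.bind ⇑P A + θ.bind ⇑P A = μ₂.bind ⇑P A + η.bind ⇑P A := by
      rw [hbind_apply _ _ hA, hbind_apply _ _ hA, hbind_apply _ _ hA, hbind_apply _ _ hA,
        ← lintegral_add_measure, ← lintegral_add_measure, hmeq]
    have t1 : (μ₁.bind ⇑P A).toReal + (θ.bind ⇑P A).toReal =
        (μ₂.bind ⇑P A).toReal + (η.bind ⇑P A).toReal := by
      rw [← ENNReal.toReal_add (measure_ne_top _ _) (measure_ne_top _ _),
        ← ENNReal.toReal_add (measure_ne_top _ _) (measure_ne_top _ _), hbeq]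
    have hκA1 : κ A ≤ η.bind ⇑P A := Measure.le_iff'.1 (hκle η hceη) A
    have hκA2 : κ A ≤ θ.bind ⇑P A := Measure.le_iff'.1 (hκle θ hceθ) A
    have hp' : (p A).toReal = (η.bind ⇑P A).toReal - (κ A).toReal := by
      rw [hpdef, Measure.sub_apply hA (hκle η hceη),
        ENNReal.toReal_sub_of_le hκA1 (measure_ne_top _ _)]
    have hq' : (q A).toReal = (θ.bind ⇑P A).toReal - (κ A).toReal := by
      rw [hqdef, Measure.sub_apply hA (hκle θ hceθ),
        ENNReal.toReal_sub_of_le hκA2 (measure_ne_top _ _)]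
    simp only [Measure.real]
    rw [hp', hq']
    linarith
  -- the weight function
  have hgmeas : Measurable (fun y => ENNReal.ofReal (1 + β * V y)) :=
    ((hVmeas.const_mul β).const_add 1).ennreal_ofReal
  have hgsplit : ∀ y, ENNReal.ofReal (1 + β * V y)
      = 1 + ENNReal.ofReal β * ENNReal.ofReal (V y) := by
    intro y
    rw [ENNReal.ofReal_add zero_le_one (mul_nonneg hβpos.le (hVnonneg y)),
      ENNReal.ofReal_one, ENNReal.ofReal_mul hβpos.le]
  have hgint : ∀ ξ : Measure X, ∫⁻ y, ENNReal.ofReal (1 + β * V y) ∂ξ =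
      ξ Set.univ + ENNReal.ofReal β * ∫⁻ y, ENNReal.ofReal (V y) ∂ξ := by
    intro ξ
    simp_rw [hgsplit]
    rw [lintegral_add_left measurable_const, lintegral_one,
      lintegral_const_mul _ hVmeas.ennreal_ofReal]
  -- drift bound for a single point
  have hPg : ∀ x, ∫⁻ y, ENNReal.ofReal (1 + β * V y) ∂(P x) ≤
      1 + ENNReal.ofReal β * (ENNReal.ofReal γ * ENNReal.ofReal (V x) + ENNReal.ofReal K) := by
    intro x
    rw [hgint (P x), measure_univ]
    gcongr
    refine le_trans (hdrift x) ?_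
    rw [ENNReal.ofReal_add (mul_nonneg hγ0.le (hVnonneg x)) hK.le, ENNReal.ofReal_mul hγ0.le]
  -- drift bound for a measure
  have hbound : ∀ ξ : Measure X, ∫⁻ y, ENNReal.ofReal (1 + β * V y) ∂(ξ.bind ⇑P) ≤
      ξ Set.univ + ENNReal.ofReal β * (ENNReal.ofReal γ * ∫⁻ y, ENNReal.ofReal (V y) ∂ξ
        + ENNReal.ofReal K * ξ Set.univ) := by
    intro ξ
    rw [Measure.lintegral_bind hPmeas.aemeasurable hgmeas.aemeasurable]
    refine le_trans (lintegral_mono hPg) ?_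
    rw [lintegral_add_left measurable_const, lintegral_one,
      lintegral_const_mul _ ((hVmeas.ennreal_ofReal.const_mul _).add_const _),
      lintegral_add_right _ measurable_const, lintegral_const,
      lintegral_const_mul _ hVmeas.ennreal_ofReal]
  -- real quantities
  have hSηfin : ∫⁻ y, ENNReal.ofReal (V y) ∂η ≠ ⊤ :=
    ne_top_of_le_ne_top h₁.ne (lintegral_mono' hηle le_rfl)
  have hSθfin : ∫⁻ y, ENNReal.ofReal (V y) ∂θ ≠ ⊤ :=
    ne_top_of_le_ne_top h₂.ne (lintegral_mono' hθle le_rfl)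
  set m := (η Set.univ).toReal with hmdef
  set e₁ := (η C).toReal with he₁def
  set e₂ := (θ C).toReal with he₂def
  set s₁ := (∫⁻ y, ENNReal.ofReal (V y) ∂η).toReal with hs₁def
  set s₂ := (∫⁻ y, ENNReal.ofReal (V y) ∂θ).toReal with hs₂def
  have hm0 : 0 ≤ m := ENNReal.toReal_nonneg
  have he₁0 : 0 ≤ e₁ := ENNReal.toReal_nonneg
  have he₂0 : 0 ≤ e₂ := ENNReal.toReal_nonneg
  have hs₁0 : 0 ≤ s₁ := ENNReal.toReal_nonneg
  have hs₂0 : 0 ≤ s₂ := ENNReal.toReal_nonneg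
  have hηuniv' : η Set.univ = ENNReal.ofReal m := (ENNReal.ofReal_toReal (measure_ne_top _ _)).symm
  have hθuniv' : θ Set.univ = ENNReal.ofReal m := by rw [← hηθuniv]; exact hηuniv'
  have hE1 : η C = ENNReal.ofReal e₁ := (ENNReal.ofReal_toReal (measure_ne_top _ _)).symm
  have hE2 : θ C = ENNReal.ofReal e₂ := (ENNReal.ofReal_toReal (measure_ne_top _ _)).symm
  have hS1 : ∫⁻ y, ENNReal.ofReal (V y) ∂η = ENNReal.ofReal s₁ :=
    (ENNReal.ofReal_toReal hSηfin).symm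
  have hS2 : ∫⁻ y, ENNReal.ofReal (V y) ∂θ = ENNReal.ofReal s₂ :=
    (ENNReal.ofReal_toReal hSθfin).symm
  have hce' : ce = ENNReal.ofReal (min e₁ e₂) := by
    rw [hcedef, hE1, hE2]
    rcases le_total e₁ e₂ with h | h
    · rw [min_eq_left (ENNReal.ofReal_le_ofReal h), min_eq_left h]
    · rw [min_eq_right (ENNReal.ofReal_le_ofReal h), min_eq_right h]
  have he₁m : e₁ ≤ m := ENNReal.toReal_mono (measure_ne_top η _) (measure_mono (Set.subset_univ _))
  have hθm : (θ Set.univ).toReal = m := by rw [← hηθuniv]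
  have he₂m : e₂ ≤ m := by
    rw [← hθm]
    exact ENNReal.toReal_mono (measure_ne_top θ _) (measure_mono (Set.subset_univ _))
  -- lower bound on the V-integrals outside C
  have houtside : ∀ ξ : Measure X, IsFiniteMeasure ξ →
      ENNReal.ofReal R * ξ Cᶜ ≤ ∫⁻ y, ENNReal.ofReal (V y) ∂ξ := by
    intro ξ hξ
    calc ENNReal.ofReal R * ξ Cᶜ = ∫⁻ _ in Cᶜ, ENNReal.ofReal R ∂ξ := (setLIntegral_const _ _).symm
      _ ≤ ∫⁻ y in Cᶜ, ENNReal.ofReal (V y) ∂ξ := by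
          refine setLIntegral_mono hVmeas.ennreal_ofReal fun y hy => ?_
          exact ENNReal.ofReal_le_ofReal (le_of_not_ge (by simpa [hCdef] using hy))
      _ ≤ ∫⁻ y, ENNReal.ofReal (V y) ∂ξ := setLIntegral_le_lintegral _ _
  have hs₁R : R * (m - e₁) ≤ s₁ := by
    have hcη : η Cᶜ = ENNReal.ofReal (m - e₁) := by
      rw [measure_compl hC (measure_ne_top _ _), hηuniv', hE1, ← ENNReal.ofReal_sub _ he₁0]
    have := houtside η inferInstance
    rw [hcη, hS1, ← ENNReal.ofReal_mul hRpos.le] at this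
    exact (ENNReal.ofReal_le_ofReal_iff hs₁0).mp this
  have hs₂R : R * (m - e₂) ≤ s₂ := by
    have hcθ : θ Cᶜ = ENNReal.ofReal (m - e₂) := by
      rw [measure_compl hC (measure_ne_top _ _), hθuniv', hE2, ← ENNReal.ofReal_sub _ he₂0]
    have := houtside θ inferInstance
    rw [hcθ, hS2, ← ENNReal.ofReal_mul hRpos.le] at this
    exact (ENNReal.ofReal_le_ofReal_iff hs₂0).mp this
  -- the key real inequality
  obtain ⟨hζbar1, hkey⟩ := key_real γ K R ζ ζ₀ γ₀ β ζbar m e₁ e₂ s₁ s₂ hγ0 hγ1 hK hR hζ0 hζ1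
    hζ₀0 hζ₀ζ hγ₀l hγ₀1 hβ hζbar hm0 he₁0 he₂0 he₁m he₂m hs₁0 hs₂0 hs₁R hs₂R
  refine ⟨hζbar1, ?_⟩
  show rhoBeta β V (μ₁.bind ⇑P) (μ₂.bind ⇑P) ≤ ENNReal.ofReal ζbar * rhoBeta β V μ₁ μ₂
  -- value of rhoBeta μ₁ μ₂
  have htv12 : tvMeasure μ₁ μ₂ = η + θ := by rw [tvMeasure_eq]; rfl
  have hrho12 : rhoBeta β V μ₁ μ₂ =
      ENNReal.ofReal ((m + β * s₁) + (m + β * s₂)) := by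
    simp only [rhoBeta]
    rw [htv12, lintegral_add_measure, hgint η, hgint θ, hηuniv', hθuniv', hS1, hS2,
      ← ENNReal.ofReal_mul hβpos.le, ← ENNReal.ofReal_mul hβpos.le,
      ← ENNReal.ofReal_add hm0 (mul_nonneg hβpos.le hs₁0),
      ← ENNReal.ofReal_add hm0 (mul_nonneg hβpos.le hs₂0),
      ← ENNReal.ofReal_add (add_nonneg hm0 (mul_nonneg hβpos.le hs₁0))
        (add_nonneg hm0 (mul_nonneg hβpos.le hs₂0))]
  -- bound rhoBeta of the binds by the integral against p + q
  have hL1 : rhoBeta β V (μ₁.bind ⇑P) (μ₂.bind ⇑P) ≤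
      ∫⁻ y, ENNReal.ofReal (1 + β * V y) ∂p + ∫⁻ y, ENNReal.ofReal (1 + β * V y) ∂q := by
    simp only [rhoBeta]
    rw [tvMeasure_eq, hsigned, ← lintegral_add_measure]
    exact lintegral_mono' (tv_le_add p q) le_rfl
  -- the common mass
  set w := ENNReal.ofReal (ζ * min e₁ e₂) with hwdef
  have hκg : w ≤ ∫⁻ y, ENNReal.ofReal (1 + β * V y) ∂κ := by
    have h1 : κ Set.univ ≤ ∫⁻ y, ENNReal.ofReal (1 + β * V y) ∂κ := by
      rw [← lintegral_one]
      refine lintegral_mono fun y => ?_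
      rw [show (1 : ℝ≥0∞) = ENNReal.ofReal 1 by simp]
      exact ENNReal.ofReal_le_ofReal (by nlinarith [hVnonneg y, hβpos.le])
    rw [hκuniv, hce', ← ENNReal.ofReal_mul hζ0.le] at h1
    exact h1
  have hwfin : w + w ≠ ⊤ := by simp [hwdef]
  -- main chain
  have hchain : (∫⁻ y, ENNReal.ofReal (1 + β * V y) ∂p + ∫⁻ y, ENNReal.ofReal (1 + β * V y) ∂q)
      + (w + w) ≤
      (η Set.univ + ENNReal.ofReal β * (ENNReal.ofReal γ * ∫⁻ y, ENNReal.ofReal (V y) ∂η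
        + ENNReal.ofReal K * η Set.univ)) +
      (θ Set.univ + ENNReal.ofReal β * (ENNReal.ofReal γ * ∫⁻ y, ENNReal.ofReal (V y) ∂θ
        + ENNReal.ofReal K * θ Set.univ)) := by
    calc (∫⁻ y, ENNReal.ofReal (1 + β * V y) ∂p + ∫⁻ y, ENNReal.ofReal (1 + β * V y) ∂q)
        + (w + w)
        ≤ (∫⁻ y, ENNReal.ofReal (1 + β * V y) ∂p + ∫⁻ y, ENNReal.ofReal (1 + β * V y) ∂q)
          + (∫⁻ y, ENNReal.ofReal (1 + β * V y) ∂κ + ∫⁻ y, ENNReal.ofReal (1 + β * V y) ∂κ) :=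
          add_le_add le_rfl (add_le_add hκg hκg)
      _ = (∫⁻ y, ENNReal.ofReal (1 + β * V y) ∂p + ∫⁻ y, ENNReal.ofReal (1 + β * V y) ∂κ)
          + (∫⁻ y, ENNReal.ofReal (1 + β * V y) ∂q + ∫⁻ y, ENNReal.ofReal (1 + β * V y) ∂κ) := by
          ring
      _ = ∫⁻ y, ENNReal.ofReal (1 + β * V y) ∂(η.bind ⇑P)
          + ∫⁻ y, ENNReal.ofReal (1 + β * V y) ∂(θ.bind ⇑P) := by
          rw [← lintegral_add_measure, ← lintegral_add_measure, hpκ, hqκ]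
      _ ≤ _ := add_le_add (hbound η) (hbound θ)
  have hfinal : (η Set.univ + ENNReal.ofReal β * (ENNReal.ofReal γ * ∫⁻ y, ENNReal.ofReal (V y) ∂η
        + ENNReal.ofReal K * η Set.univ)) +
      (θ Set.univ + ENNReal.ofReal β * (ENNReal.ofReal γ * ∫⁻ y, ENNReal.ofReal (V y) ∂θ
        + ENNReal.ofReal K * θ Set.univ)) ≤
      ENNReal.ofReal ζbar * rhoBeta β V μ₁ μ₂ + (w + w) := by
    have n1 : 0 ≤ γ * s₁ + K * m := add_nonneg (mul_nonneg hγ0.le hs₁0) (mul_nonneg hK.le hm0)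
    have n2 : 0 ≤ γ * s₂ + K * m := add_nonneg (mul_nonneg hγ0.le hs₂0) (mul_nonneg hK.le hm0)
    have n3 : 0 ≤ β * (γ * s₁ + K * m) := mul_nonneg hβpos.le n1
    have n4 : 0 ≤ β * (γ * s₂ + K * m) := mul_nonneg hβpos.le n2
    have n5 : 0 ≤ m + β * s₁ := add_nonneg hm0 (mul_nonneg hβpos.le hs₁0)
    have n6 : 0 ≤ m + β * s₂ := add_nonneg hm0 (mul_nonneg hβpos.le hs₂0)
    have n7 : 0 ≤ ζ * min e₁ e₂ := mul_nonneg hζ0.le (le_min he₁0 he₂0)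
    rw [hrho12, hηuniv', hθuniv', hS1, hS2, hwdef,
      ← ENNReal.ofReal_mul hγ0.le, ← ENNReal.ofReal_mul hγ0.le,
      ← ENNReal.ofReal_mul hK.le,
      ← ENNReal.ofReal_add (mul_nonneg hγ0.le hs₁0) (mul_nonneg hK.le hm0),
      ← ENNReal.ofReal_add (mul_nonneg hγ0.le hs₂0) (mul_nonneg hK.le hm0),
      ← ENNReal.ofReal_mul hβpos.le, ← ENNReal.ofReal_mul hβpos.le,
      ← ENNReal.ofReal_add hm0 n3, ← ENNReal.ofReal_add hm0 n4,
      ← ENNReal.ofReal_add (add_nonneg hm0 n3) (add_nonneg hm0 n4),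
      ← ENNReal.ofReal_mul hζbar0,
      ← ENNReal.ofReal_add n7 n7,
      ← ENNReal.ofReal_add (mul_nonneg hζbar0 (add_nonneg n5 n6)) (add_nonneg n7 n7)]
    refine ENNReal.ofReal_le_ofReal ?_
    nlinarith [hkey]
  refine le_trans hL1 ?_
  exact (ENNReal.add_le_add_iff_right hwfin).mp (le_trans hchain hfinal)
end

section
/- Let X be a compact metric space and T : X → X a continuous map. Let K be a nonempty convex set of T-invariant Borel probability measures on X that is compact in the weak-* topology and has the following closure property: whenever μ ∈ K and μ̃ is a T-invariant probability measure absolutely continuous with respect to μ, then μ̃ ∈ K. Then every μ ∈ K belongs to the closed convex hull (in the weak-* topology) of the set of ergodic measures contained in K. -/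
open MeasureTheory
open scoped NNReal ENNReal BoundedContinuousFunction

set_option linter.unusedSectionVars false
set_option maxHeartbeats 1000000

section ProbPhiAux

variable {X : Type*} [MetricSpace X] [CompactSpace X] [MeasurableSpace X] [BorelSpace X]

/-- The pairing of a probability measure with bounded continuous real functions, as an element
of the product space `(X →ᵇ ℝ) → ℝ` (which carries the topology of pointwise convergence,
so that `probPhi` realizes the weak-* topology). -/
noncomputable def probPhi (μ : ProbabilityMeasure X) : (X →ᵇ ℝ) → ℝ :=
  fun f => ∫ x, f x ∂(μ : Measure X)

lemma probPhi_apply (μ : ProbabilityMeasure X) (f : X →ᵇ ℝ) :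
    probPhi μ f = ∫ x, f x ∂(μ : Measure X) := rfl

lemma continuous_probPhi : Continuous (probPhi (X := X)) :=
  continuous_pi fun f =>
    ProbabilityMeasure.continuous_integral_boundedContinuousFunction f

lemma isInducing_probPhi : Topology.IsInducing (probPhi (X := X)) := by
  rw [Topology.isInducing_iff_nhds]
  intro μ
  refine le_antisymm (continuous_probPhi.continuousAt.le_comap) ?_
  have : Filter.Tendsto id (Filter.comap (probPhi (X := X)) (nhds (probPhi μ))) (nhds μ) := by
    rw [ProbabilityMeasure.tendsto_iff_forall_integral_tendsto]
    intro f
    have h1 : Filter.Tendsto (probPhi (X := X))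
        (Filter.comap (probPhi (X := X)) (nhds (probPhi μ))) (nhds (probPhi μ)) :=
      Filter.tendsto_comap
    have h2 : Continuous fun φ : (X →ᵇ ℝ) → ℝ => φ f := continuous_apply f
    exact (h2.tendsto _).comp h1
  exact this

lemma probPhi_injective : Function.Injective (probPhi (X := X)) := by
  intro μ ν h
  apply ProbabilityMeasure.toMeasure_injective
  apply ext_of_forall_lintegral_eq_of_IsFiniteMeasure
  intro g
  have hg : Continuous fun x => (g x : ℝ) := NNReal.continuous_coe.comp g.continuous
  set gR : X →ᵇ ℝ := BoundedContinuousFunction.mkOfCompact ⟨fun x => (g x : ℝ), hg⟩ with hgR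
  have h1 : (∫⁻ x, g x ∂(μ : Measure X)).toReal = (∫⁻ x, g x ∂(ν : Measure X)).toReal := by
    rw [BoundedContinuousFunction.toReal_lintegral_coe_eq_integral,
      BoundedContinuousFunction.toReal_lintegral_coe_eq_integral]
    exact congrFun h gR
  exact (ENNReal.toReal_eq_toReal_iff' (g.lintegral_lt_top_of_nnreal _).ne
    (g.lintegral_lt_top_of_nnreal _).ne).mp h1

lemma probPhi_comb (ν μ₁ μ₂ : ProbabilityMeasure X) (c₁ c₂ : ℝ≥0∞)
    (h₁ : c₁ ≠ ∞) (h₂ : c₂ ≠ ∞)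
    (h : (ν : Measure X) = c₁ • (μ₁ : Measure X) + c₂ • (μ₂ : Measure X)) :
    probPhi ν = c₁.toReal • probPhi μ₁ + c₂.toReal • probPhi μ₂ := by
  funext f
  haveI i1 : IsFiniteMeasure (c₁ • (μ₁ : Measure X)) :=
    ⟨by simp [Measure.smul_apply, h₁.lt_top]⟩
  haveI i2 : IsFiniteMeasure (c₂ • (μ₂ : Measure X)) :=
    ⟨by simp [Measure.smul_apply, h₂.lt_top]⟩
  show ∫ x, f x ∂(ν : Measure X) = c₁.toReal • (∫ x, f x ∂(μ₁ : Measure X))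
      + c₂.toReal • (∫ x, f x ∂(μ₂ : Measure X))
  rw [h, integral_add_measure (f.integrable _) (f.integrable _),
    integral_smul_measure, integral_smul_measure]

lemma probPhi_sum {n : ℕ} (w : Fin n → ℝ≥0) (m : Fin n → ProbabilityMeasure X)
    (ν : ProbabilityMeasure X)
    (hν : (ν : Measure X) = ∑ i, ((w i : ℝ≥0∞) • (m i : Measure X))) :
    probPhi ν = ∑ i, ((w i : ℝ) • probPhi (m i)) := by
  funext f
  have insts : ∀ i : Fin n, IsFiniteMeasure ((w i : ℝ≥0∞) • (m i : Measure X)) := fun i =>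
    ⟨by simp [Measure.smul_apply]⟩
  rw [Finset.sum_apply]
  show ∫ x, f x ∂(ν : Measure X) = _
  rw [hν, integral_finset_sum_measure (fun i _ => by
    haveI := insts i; exact f.integrable _)]
  refine Finset.sum_congr rfl fun i _ => ?_
  rw [integral_smul_measure]
  show _ = (w i : ℝ) • probPhi (m i) f
  rw [probPhi_apply]
  simp [smul_eq_mul]

lemma convex_probPhi_image (K : Set (ProbabilityMeasure X))
    (hconv : ∀ μ₁ ∈ K, ∀ μ₂ ∈ K, ∀ t : ℝ≥0, t ≤ 1 → ∀ ν : ProbabilityMeasure X,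
      (ν : Measure X) =
        (t : ℝ≥0∞) • (μ₁ : Measure X) + ((1 - t : ℝ≥0) : ℝ≥0∞) • (μ₂ : Measure X) → ν ∈ K) :
    Convex ℝ (probPhi '' K) := by
  rintro x ⟨μ₁, hμ₁, rfl⟩ y ⟨μ₂, hμ₂, rfl⟩ a b ha hb hab
  set t : ℝ≥0 := ⟨a, ha⟩ with htdef
  have ht1 : t ≤ 1 := by
    rw [← NNReal.coe_le_coe]; show a ≤ (1 : ℝ); linarith
  have hb' : ((1 - t : ℝ≥0) : ℝ) = b := by
    rw [NNReal.coe_sub ht1]; show (1 : ℝ) - a = b; linarith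
  have hPM : IsProbabilityMeasure
      ((t : ℝ≥0∞) • (μ₁ : Measure X) + ((1 - t : ℝ≥0) : ℝ≥0∞) • (μ₂ : Measure X)) := by
    constructor
    simp only [Measure.add_apply, Measure.smul_apply, measure_univ, smul_eq_mul, mul_one]
    rw [← ENNReal.coe_add, add_tsub_cancel_of_le ht1, ENNReal.coe_one]
  set ν : ProbabilityMeasure X :=
    ⟨(t : ℝ≥0∞) • (μ₁ : Measure X) + ((1 - t : ℝ≥0) : ℝ≥0∞) • (μ₂ : Measure X), hPM⟩ with hνdef
  have hνmeas : (ν : Measure X) =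
      (t : ℝ≥0∞) • (μ₁ : Measure X) + ((1 - t : ℝ≥0) : ℝ≥0∞) • (μ₂ : Measure X) := rfl
  refine ⟨ν, hconv μ₁ hμ₁ μ₂ hμ₂ t ht1 ν hνmeas, ?_⟩
  rw [probPhi_comb ν μ₁ μ₂ _ _ ENNReal.coe_ne_top ENNReal.coe_ne_top hνmeas]
  simp only [ENNReal.coe_toReal, hb']
  rfl

lemma ergodic_of_extreme (T : X → X) (hT : Continuous T)
    (K : Set (ProbabilityMeasure X))
    (hinv : ∀ μ ∈ K, ∀ A : Set X, MeasurableSet A →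
      (μ : Measure X) (T ⁻¹' A) = (μ : Measure X) A)
    (hclosed : ∀ μ ∈ K, ∀ ν : ProbabilityMeasure X,
      (∀ A : Set X, MeasurableSet A → (ν : Measure X) (T ⁻¹' A) = (ν : Measure X) A) →
      (ν : Measure X) ≪ (μ : Measure X) → ν ∈ K)
    {z : (X →ᵇ ℝ) → ℝ} (hz : z ∈ Set.extremePoints ℝ (probPhi '' K)) :
    ∃ μ ∈ K, probPhi μ = z ∧
      ∀ A : Set X, MeasurableSet A → T ⁻¹' A = A →
        (μ : Measure X) A = 0 ∨ (μ : Measure X) A = 1 := by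
  obtain ⟨⟨μ, hμK, rfl⟩, hzext⟩ := hz
  refine ⟨μ, hμK, rfl, ?_⟩
  intro A hA hTA
  by_contra hcon
  push_neg at hcon
  obtain ⟨h0, h1⟩ := hcon
  have htop : (μ : Measure X) A ≠ ∞ := measure_ne_top _ _
  have hctop : (μ : Measure X) Aᶜ ≠ ∞ := measure_ne_top _ _
  have hc0 : (μ : Measure X) Aᶜ ≠ 0 := by
    rw [measure_compl hA htop, measure_univ]
    intro hcontra
    exact h1 (le_antisymm prob_le_one (tsub_eq_zero_iff_le.mp hcontra))
  have hTAc : T ⁻¹' Aᶜ = Aᶜ := by rw [Set.preimage_compl, hTA]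
  have key : ∀ S : Set X, MeasurableSet S → T ⁻¹' S = S → ∀ B : Set X, MeasurableSet B →
      ((μ : Measure X).restrict S) (T ⁻¹' B) = ((μ : Measure X).restrict S) B := by
    intro S hS hTS B hB
    rw [Measure.restrict_apply (hB.preimage hT.measurable), Measure.restrict_apply hB]
    calc (μ : Measure X) (T ⁻¹' B ∩ S)
        = (μ : Measure X) (T ⁻¹' (B ∩ S)) := by rw [Set.preimage_inter, hTS]
      _ = (μ : Measure X) (B ∩ S) := hinv μ hμK _ (hB.inter hS)
  have mkPM : ∀ S : Set X, MeasurableSet S → (μ : Measure X) S ≠ 0 → (μ : Measure X) S ≠ ∞ →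
      IsProbabilityMeasure (((μ : Measure X) S)⁻¹ • (μ : Measure X).restrict S) := by
    intro S hS hS0 hStop
    constructor
    rw [Measure.smul_apply, Measure.restrict_apply_univ, smul_eq_mul,
      ENNReal.inv_mul_cancel hS0 hStop]
  set ν₁ : ProbabilityMeasure X :=
    ⟨((μ : Measure X) A)⁻¹ • (μ : Measure X).restrict A, mkPM A hA h0 htop⟩ with hν₁def
  set ν₂ : ProbabilityMeasure X :=
    ⟨((μ : Measure X) Aᶜ)⁻¹ • (μ : Measure X).restrict Aᶜ, mkPM Aᶜ hA.compl hc0 hctop⟩ with hν₂def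
  have hν₁inv : ∀ B : Set X, MeasurableSet B →
      (ν₁ : Measure X) (T ⁻¹' B) = (ν₁ : Measure X) B := by
    intro B hB
    show (((μ : Measure X) A)⁻¹ • (μ : Measure X).restrict A) _ =
      (((μ : Measure X) A)⁻¹ • (μ : Measure X).restrict A) _
    rw [Measure.smul_apply, Measure.smul_apply, key A hA hTA B hB]
  have hν₂inv : ∀ B : Set X, MeasurableSet B →
      (ν₂ : Measure X) (T ⁻¹' B) = (ν₂ : Measure X) B := by
    intro B hB
    show (((μ : Measure X) Aᶜ)⁻¹ • (μ : Measure X).restrict Aᶜ) _ =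
      (((μ : Measure X) Aᶜ)⁻¹ • (μ : Measure X).restrict Aᶜ) _
    rw [Measure.smul_apply, Measure.smul_apply, key Aᶜ hA.compl hTAc B hB]
  have hν₁ac : (ν₁ : Measure X) ≪ (μ : Measure X) :=
    Measure.AbsolutelyContinuous.smul_left
      (Measure.absolutelyContinuous_of_le Measure.restrict_le_self) _
  have hν₂ac : (ν₂ : Measure X) ≪ (μ : Measure X) :=
    Measure.AbsolutelyContinuous.smul_left
      (Measure.absolutelyContinuous_of_le Measure.restrict_le_self) _
  have hν₁K : ν₁ ∈ K := hclosed μ hμK ν₁ hν₁inv hν₁ac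
  have hν₂K : ν₂ ∈ K := hclosed μ hμK ν₂ hν₂inv hν₂ac
  have hdecomp : (μ : Measure X) =
      ((μ : Measure X) A) • (ν₁ : Measure X) + ((μ : Measure X) Aᶜ) • (ν₂ : Measure X) := by
    show (μ : Measure X) =
      ((μ : Measure X) A) • (((μ : Measure X) A)⁻¹ • (μ : Measure X).restrict A) +
      ((μ : Measure X) Aᶜ) • (((μ : Measure X) Aᶜ)⁻¹ • (μ : Measure X).restrict Aᶜ)
    rw [smul_smul, smul_smul, ENNReal.mul_inv_cancel h0 htop,
      ENNReal.mul_inv_cancel hc0 hctop, one_smul, one_smul,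
      Measure.restrict_add_restrict_compl hA]
  have hcomb := probPhi_comb μ ν₁ ν₂ _ _ htop hctop hdecomp
  have ha : 0 < ((μ : Measure X) A).toReal := ENNReal.toReal_pos h0 htop
  have hb : 0 < ((μ : Measure X) Aᶜ).toReal := ENNReal.toReal_pos hc0 hctop
  have hsum1 : (μ : Measure X) A + (μ : Measure X) Aᶜ = 1 := by
    rw [measure_add_measure_compl hA]
    exact μ.2.measure_univ
  have hab : ((μ : Measure X) A).toReal + ((μ : Measure X) Aᶜ).toReal = 1 := by
    rw [← ENNReal.toReal_add htop hctop, hsum1, ENNReal.toReal_one]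
  have hseg : probPhi μ ∈ openSegment ℝ (probPhi ν₁) (probPhi ν₂) :=
    ⟨_, _, ha, hb, hab, hcomb.symm⟩
  have heq := hzext ⟨ν₁, hν₁K, rfl⟩ ⟨ν₂, hν₂K, rfl⟩ hseg
  have hν₁μ : ν₁ = μ := probPhi_injective heq
  have hone : (ν₁ : Measure X) A = 1 := by
    show (((μ : Measure X) A)⁻¹ • (μ : Measure X).restrict A) A = 1
    rw [Measure.smul_apply, Measure.restrict_apply hA, Set.inter_self, smul_eq_mul,
      ENNReal.inv_mul_cancel h0 htop]
  rw [hν₁μ] at hone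
  exact h1 hone

end ProbPhiAux

/-- On a compact metric space, every member of a weak-* compact convex set `K` of invariant
probability measures, closed under taking invariant measures absolutely continuous w.r.t. its
members, lies in the weak-* closed convex hull of the ergodic measures contained in `K`. -/
theorem mem_closed_convexHull_of_ergodic_measures
    {X : Type*} [MetricSpace X] [CompactSpace X] [MeasurableSpace X] [BorelSpace X]
    (T : X → X) (hT : Continuous T)
    (K : Set (ProbabilityMeasure X)) (hKne : K.Nonempty)
    (hinv : ∀ μ ∈ K, ∀ A : Set X, MeasurableSet A →
      (μ : Measure X) (T ⁻¹' A) = (μ : Measure X) A)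
    (hconv : ∀ μ₁ ∈ K, ∀ μ₂ ∈ K, ∀ t : ℝ≥0, t ≤ 1 → ∀ ν : ProbabilityMeasure X,
      (ν : Measure X) =
        (t : ℝ≥0∞) • (μ₁ : Measure X) + ((1 - t : ℝ≥0) : ℝ≥0∞) • (μ₂ : Measure X) → ν ∈ K)
    (hcompact : IsCompact K)
    (hclosed : ∀ μ ∈ K, ∀ ν : ProbabilityMeasure X,
      (∀ A : Set X, MeasurableSet A → (ν : Measure X) (T ⁻¹' A) = (ν : Measure X) A) →
      (ν : Measure X) ≪ (μ : Measure X) → ν ∈ K) :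
    ∀ μ ∈ K, μ ∈ closure {ν : ProbabilityMeasure X |
      ∃ (n : ℕ) (w : Fin n → ℝ≥0) (m : Fin n → ProbabilityMeasure X),
        (∀ i, m i ∈ K ∧
          (∀ A : Set X, MeasurableSet A → T ⁻¹' A = A →
            (m i : Measure X) A = 0 ∨ (m i : Measure X) A = 1)) ∧
        (∑ i, w i = 1) ∧
        (ν : Measure X) = ∑ i, ((w i : ℝ≥0∞) • (m i : Measure X))} := by
  intro μ hμ
  set S : Set (ProbabilityMeasure X) := {ν : ProbabilityMeasure X |
      ∃ (n : ℕ) (w : Fin n → ℝ≥0) (m : Fin n → ProbabilityMeasure X),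
        (∀ i, m i ∈ K ∧
          (∀ A : Set X, MeasurableSet A → T ⁻¹' A = A →
            (m i : Measure X) A = 0 ∨ (m i : Measure X) A = 1)) ∧
        (∑ i, w i = 1) ∧
        (ν : Measure X) = ∑ i, ((w i : ℝ≥0∞) • (m i : Measure X))} with hSdef
  have hCcomp : IsCompact (probPhi '' K) := hcompact.image continuous_probPhi
  have hCconv : Convex ℝ (probPhi '' K) := convex_probPhi_image K hconv
  have hKM : closure (convexHull ℝ (Set.extremePoints ℝ (probPhi '' K))) = probPhi '' K :=
    closure_convexHull_extremePoints hCcomp hCconv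
  have hsubset : convexHull ℝ (Set.extremePoints ℝ (probPhi '' K)) ⊆ probPhi '' S := by
    intro z hz
    rw [convexHull_eq] at hz
    obtain ⟨ι, t, w, zf, hw0, hw1, hzmem, hzc⟩ := hz
    have hex : ∀ i : t, ∃ μ', μ' ∈ K ∧ probPhi μ' = zf i ∧
        ∀ A : Set X, MeasurableSet A → T ⁻¹' A = A →
          (μ' : Measure X) A = 0 ∨ (μ' : Measure X) A = 1 := by
      intro i
      obtain ⟨μ', hμ'K, hμ'eq, hμ'erg⟩ :=
        ergodic_of_extreme T hT K hinv hclosed (hzmem i i.2)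
      exact ⟨μ', hμ'K, hμ'eq, hμ'erg⟩
    choose mm hmK hmPhi hmErg using hex
    set n : ℕ := t.card with hndef
    set e : t ≃ Fin n := t.equivFin with hedef
    set wF : Fin n → ℝ≥0 := fun j => (w (e.symm j)).toNNReal with hwFdef
    set mF : Fin n → ProbabilityMeasure X := fun j => mm (e.symm j) with hmFdef
    have hwF : ∀ j : Fin n, ((wF j : ℝ)) = w (e.symm j) := fun j =>
      Real.coe_toNNReal _ (hw0 _ (e.symm j).2)
    have hwFsum : ∑ j, wF j = 1 := by
      apply NNReal.coe_injective
      push_cast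
      rw [Finset.sum_congr rfl (fun j _ => hwF j),
        Equiv.sum_comp e.symm (fun i : t => w i), Finset.sum_coe_sort t w]
      exact hw1
    have hPM : IsProbabilityMeasure (∑ j, ((wF j : ℝ≥0∞) • (mF j : Measure X))) := by
      constructor
      rw [Measure.finset_sum_apply]
      have hterm : ∀ j ∈ Finset.univ, ((wF j : ℝ≥0∞) • (mF j : Measure X)) Set.univ
          = ((wF j : ℝ≥0∞)) := by
        intro j _
        rw [Measure.smul_apply, smul_eq_mul]
        have huniv : (mF j : Measure X) Set.univ = 1 := (mF j).2.measure_univ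
        rw [huniv, mul_one]
      rw [Finset.sum_congr rfl hterm, ← ENNReal.coe_finset_sum, hwFsum, ENNReal.coe_one]
    set ν : ProbabilityMeasure X := ⟨∑ j, ((wF j : ℝ≥0∞) • (mF j : Measure X)), hPM⟩ with hνdef
    have hνmeas : (ν : Measure X) = ∑ j, ((wF j : ℝ≥0∞) • (mF j : Measure X)) := rfl
    refine ⟨ν, ⟨n, wF, mF, fun j => ⟨hmK _, hmErg _⟩, hwFsum, hνmeas⟩, ?_⟩
    rw [probPhi_sum wF mF ν hνmeas, ← hzc, Finset.centerMass_eq_of_sum_1 _ _ hw1,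
      ← Finset.sum_coe_sort t (fun i => w i • zf i),
      ← Equiv.sum_comp e.symm (fun i : t => w i • zf i)]
    refine Finset.sum_congr rfl fun j _ => ?_
    rw [hwF j, hmPhi (e.symm j)]
  have hmem : probPhi μ ∈ closure (convexHull ℝ (Set.extremePoints ℝ (probPhi '' K))) := by
    rw [hKM]; exact ⟨μ, hμ, rfl⟩
  have hmem2 : probPhi μ ∈ closure (probPhi '' S) :=
    closure_mono hsubset hmem
  rw [(isInducing_probPhi (X := X)).closure_eq_preimage_closure_image S]
  exact hmem2
end

section
/- Let ω̄ : ℝ → ℝ be continuous and 1-periodic, let χ : ℝ → ℝ be continuous, 1-periodic, and strictly positive, and let ε > 0. Define Ω(θ) = −2·∫₀^θ ω̄(s)/χ(s)² ds and ρ(θ) = χ(θ)⁻²·∫_θ^{θ+1} e^{−(Ω(θ)−Ω(s))/ε} ds. Then: (i) ρ is strictly positive and 1-periodic; (ii) the function θ ↦ χ(θ)²ρ(θ) is differentiable, and for every θ ∈ ℝ one has the constant-flux identity (ε/2)·(d/dθ)(χ²ρ)(θ) − ω̄(θ)·ρ(θ) = (ε/2)·(e^{Ω(1)/ε} − 1).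 In particular ρ is a stationary density for the Fokker–Planck operator: (ε/2)·(χ²ρ)″ − (ω̄ρ)′ = 0 in the sense that (ε/2)(χ²ρ)′ − ω̄ρ is constant. -/
open MeasureTheory intervalIntegral

/-- The (unnormalized) density `ρ(θ) = χ(θ)⁻² ∫_θ^{θ+1} e^{-(Ω(θ)-Ω(s))/ε} ds` is positive,
`1`-periodic, and satisfies the constant-flux identity
`(ε/2) (χ²ρ)'(θ) - ω̄(θ) ρ(θ) = (ε/2)(e^{Ω(1)/ε} - 1)`;
in particular it is a stationary density for the Fokker–Planck operator. -/
theorem stationary_density_fokker_planck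
    (w χ : ℝ → ℝ) (hw : Continuous w) (hwper : ∀ θ, w (θ + 1) = w θ)
    (hχ : Continuous χ) (hχpos : ∀ θ, 0 < χ θ) (hχper : ∀ θ, χ (θ + 1) = χ θ)
    (ε : ℝ) (hε : 0 < ε)
    (Ω ρ : ℝ → ℝ)
    (hΩ : ∀ θ, Ω θ = -2 * ∫ s in (0:ℝ)..θ, w s / (χ s) ^ 2)
    (hρ : ∀ θ, ρ θ = ((χ θ) ^ 2)⁻¹ * ∫ s in θ..(θ + 1), Real.exp (-(Ω θ - Ω s) / ε)) :
    (∀ θ, 0 < ρ θ) ∧ (∀ θ, ρ (θ + 1) = ρ θ) ∧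
    (∀ θ, ∃ d : ℝ, HasDerivAt (fun u => (χ u) ^ 2 * ρ u) d θ ∧
      ε / 2 * d - w θ * ρ θ = ε / 2 * (Real.exp (Ω 1 / ε) - 1)) := by
  have hχne : ∀ θ, (χ θ) ^ 2 ≠ 0 := fun θ => pow_ne_zero 2 (hχpos θ).ne'
  set f : ℝ → ℝ := fun s => w s / (χ s) ^ 2 with hf
  have hfc : Continuous f := hw.div (hχ.pow 2) hχne
  have hfper : Function.Periodic f 1 := fun θ => by simp only [hf, hwper θ, hχper θ]
  -- derivative of Ω
  have hΩd : ∀ θ, HasDerivAt Ω (-2 * f θ) θ := by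
    intro θ
    have h1 : HasDerivAt (fun u => ∫ s in (0:ℝ)..u, f s) (f θ) θ :=
      intervalIntegral.integral_hasDerivAt_right (hfc.intervalIntegrable 0 θ)
        (hfc.stronglyMeasurableAtFilter _ _) hfc.continuousAt
    have h2 : HasDerivAt (fun u => -2 * ∫ s in (0:ℝ)..u, f s) (-2 * f θ) θ :=
      h1.const_mul (-2)
    exact h2.congr_of_eventuallyEq (Filter.Eventually.of_forall fun x => hΩ x)
  have hΩc : Continuous Ω := by
    have : Differentiable ℝ Ω := fun θ => (hΩd θ).differentiableAt
    exact this.continuous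
  -- Ω(θ+1) = Ω θ + Ω 1
  have hΩadd : ∀ θ, Ω (θ + 1) = Ω θ + Ω 1 := by
    intro θ
    have h1 : (∫ s in θ..(θ + 1), f s) = ∫ s in (0:ℝ)..(0 + 1), f s :=
      hfper.intervalIntegral_add_eq θ 0
    rw [zero_add] at h1
    have h2 : (∫ s in (0:ℝ)..(θ + 1), f s) =
        (∫ s in (0:ℝ)..θ, f s) + ∫ s in θ..(θ + 1), f s :=
      (integral_add_adjacent_intervals (hfc.intervalIntegrable _ _)
        (hfc.intervalIntegrable _ _)).symm
    rw [hΩ (θ + 1), hΩ θ, hΩ 1, h2, h1]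
    ring
  set g : ℝ → ℝ := fun s => Real.exp (Ω s / ε) with hg
  have hgc : Continuous g := Real.continuous_exp.comp (hΩc.div_const ε)
  set G : ℝ → ℝ := fun u => ∫ s in (0:ℝ)..u, g s with hG
  have hGd : ∀ u, HasDerivAt G (g u) u := fun u =>
    intervalIntegral.integral_hasDerivAt_right (hgc.intervalIntegrable 0 u)
      (hgc.stronglyMeasurableAtFilter _ _) hgc.continuousAt
  have hGdiff : ∀ θ : ℝ, G (θ + 1) - G θ = ∫ s in θ..(θ + 1), g s := by
    intro θ
    simp only [hG]
    rw [← integral_add_adjacent_intervals (a := (0:ℝ)) (b := θ) (c := θ + 1)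
      (hgc.intervalIntegrable _ _) (hgc.intervalIntegrable _ _)]
    ring
  -- key formula: χ² ρ θ = exp(-Ω θ / ε) * (G (θ+1) - G θ)
  have hkey : ∀ θ, (χ θ) ^ 2 * ρ θ = Real.exp (-Ω θ / ε) * (G (θ + 1) - G θ) := by
    intro θ
    rw [hρ θ, ← mul_assoc, mul_inv_cancel₀ (hχne θ), one_mul, hGdiff θ,
      ← intervalIntegral.integral_const_mul]
    congr 1; ext s
    rw [hg, ← Real.exp_add]
    congr 1; ring
  have hGpos : ∀ θ, 0 < G (θ + 1) - G θ := by
    intro θ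
    rw [hGdiff θ]
    exact intervalIntegral_pos_of_pos (hgc.intervalIntegrable _ _)
      (fun x => Real.exp_pos _) (by linarith)
  have hρval : ∀ θ, ρ θ = ((χ θ) ^ 2)⁻¹ * (Real.exp (-Ω θ / ε) * (G (θ + 1) - G θ)) := by
    intro θ
    rw [← hkey θ, ← mul_assoc, inv_mul_cancel₀ (hχne θ), one_mul]
  refine ⟨?_, ?_, ?_⟩
  · intro θ
    rw [hρval θ]
    have h1 := hGpos θ
    have h2 := Real.exp_pos (-Ω θ / ε)
    have h3 := hχpos θ
    positivity
  · -- periodicity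
    intro θ
    rw [hρ (θ + 1), hρ θ, hχper θ]
    congr 1
    have hsub : (∫ s in (θ + 1)..(θ + 1 + 1), Real.exp (-(Ω (θ + 1) - Ω s) / ε)) =
        ∫ s in θ..(θ + 1), Real.exp (-(Ω (θ + 1) - Ω (s + 1)) / ε) :=
      (intervalIntegral.integral_comp_add_right (a := θ) (b := θ + 1)
        (fun s => Real.exp (-(Ω (θ + 1) - Ω s) / ε)) 1).symm
    rw [hsub]
    congr 1; ext s
    rw [hΩadd θ, hΩadd s]
    congr 1; ring
  · -- derivative
    intro θ
    have hEd : HasDerivAt (fun u => Real.exp (-Ω u / ε))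
        (Real.exp (-Ω θ / ε) * (-(-2 * f θ) / ε)) θ := by
      have := ((hΩd θ).neg.div_const ε).exp
      simpa [neg_div] using this
    have hFd : HasDerivAt (fun u => G (u + 1) - G u) (g (θ + 1) - g θ) θ := by
      have h1 : HasDerivAt (fun u : ℝ => u + 1) 1 θ := (hasDerivAt_id θ).add_const 1
      have h2 : HasDerivAt (fun u => G (u + 1)) (g (θ + 1) * 1) θ :=
        ((hGd (θ + 1)).comp_add_const θ 1).congr_deriv (mul_one _).symm
      exact (h2.sub (hGd θ)).congr_deriv (by simp)
    have hprod : HasDerivAt (fun u => Real.exp (-Ω u / ε) * (G (u + 1) - G u))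
        (Real.exp (-Ω θ / ε) * (-(-2 * f θ) / ε) * (G (θ + 1) - G θ) +
          Real.exp (-Ω θ / ε) * (g (θ + 1) - g θ)) θ := hEd.mul hFd
    refine ⟨_, hprod.congr_of_eventuallyEq
      (Filter.Eventually.of_forall fun x => hkey x), ?_⟩
    have hE1 : Real.exp (-Ω θ / ε) * (g (θ + 1) - g θ) = Real.exp (Ω 1 / ε) - 1 := by
      rw [hg]
      rw [mul_sub, ← Real.exp_add, ← Real.exp_add, hΩadd θ]
      have h1 : -Ω θ / ε + (Ω θ + Ω 1) / ε = Ω 1 / ε := by ring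
      have h2 : -Ω θ / ε + Ω θ / ε = 0 := by ring
      rw [h1, h2, Real.exp_zero]
    have hfw : f θ * (χ θ) ^ 2 = w θ := div_mul_cancel₀ _ (hχne θ)
    have hk := hkey θ
    have hthis : ε / 2 * (Real.exp (-Ω θ / ε) * (-(-2 * f θ) / ε) * (G (θ + 1) - G θ)) =
        f θ * ((χ θ) ^ 2 * ρ θ) := by
      rw [hk]
      field_simp
    rw [mul_add, hE1, hthis, ← mul_assoc, hfw]
    ring
end

section
/- Let Ω : ℝ → ℝ be twice continuously differentiable with |Ω′(θ)| ≤ M and |Ω″(θ)| ≤ M for all θ, and Ω′(θ) ≤ −c₀ < 0 for all θ. Then there exist constants C > 0 and ε₀ > 0 (depending only on M and c₀) such that for all ε ∈ (0, ε₀) and all θ ∈ ℝ: |∫_θ^{θ+1} e^{(Ω(s)−Ω(θ))/ε} ds − ε/(−Ω′(θ))| ≤ C·ε²·(log(1/ε))². -/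
open MeasureTheory intervalIntegral

lemma aux_eps_log_sq {ε : ℝ} (h0 : 0 < ε) (h1 : ε < 1) :
    ε * (Real.log (1/ε))^2 ≤ 16 * Real.sqrt ε := by
  set t := Real.sqrt (Real.sqrt ε) with ht
  have hsε : 0 < Real.sqrt ε := Real.sqrt_pos.mpr h0
  have htpos : 0 < t := Real.sqrt_pos.mpr hsε
  have ht2 : t^2 = Real.sqrt ε := Real.sq_sqrt hsε.le
  have ht4 : t^4 = ε := by
    have h2 : (t^2)^2 = ε := by rw [ht2]; exact Real.sq_sqrt h0.le
    nlinarith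
  have hlog : Real.log (1/ε) = 4 * Real.log (1/t) := by
    rw [one_div, one_div, ← ht4, ← inv_pow, Real.log_pow]
    norm_num
  have hpos : (0:ℝ) < 1/t := by positivity
  have hlt : Real.log (1/t) ≤ 1/t := by
    have := Real.log_le_sub_one_of_pos hpos
    linarith
  have htlt1 : t ≤ 1 := by
    by_contra h
    push_neg at h
    have h4 := one_lt_pow₀ h (by norm_num : 4 ≠ 0)
    rw [ht4] at h4; linarith
  have hlnn : 0 ≤ Real.log (1/t) := by
    apply Real.log_nonneg
    rw [le_div_iff₀ htpos]; linarith
  have htx : Real.log (1/t) * t ≤ 1 := (le_div_iff₀ htpos).mp hlt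
  have h2 : (Real.log (1/t) * t)^2 ≤ 1 := by
    nlinarith [mul_nonneg hlnn htpos.le]
  have h3 : t^2 * (Real.log (1/t) * t)^2 ≤ t^2 * 1 :=
    mul_le_mul_of_nonneg_left h2 (sq_nonneg t)
  have key : t^4 * (4 * Real.log (1/t))^2 ≤ 16 * t^2 := by nlinarith [h3]
  calc ε * (Real.log (1/ε))^2 = t^4 * (4 * Real.log (1/t))^2 := by rw [ht4, hlog]
    _ ≤ 16 * t^2 := key
    _ = 16 * Real.sqrt ε := by rw [ht2]

lemma aux_int_exp {a : ℝ} (ha : a ≠ 0) (c b : ℝ) :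
    ∫ s in c..b, Real.exp (a*(s-c)) = Real.exp (a*(b-c))/a - Real.exp (a*(c-c))/a := by
  apply integral_eq_sub_of_hasDerivAt (f := fun s => Real.exp (a*(s-c))/a)
  · intro x _
    have h1 : HasDerivAt (fun s : ℝ => a*(s-c)) a x := by
      simpa using ((hasDerivAt_id x).sub_const c).const_mul a
    have h2 := (h1.exp).div_const a
    simpa [mul_div_assoc, mul_div_cancel_left₀ _ ha, mul_comm] using h2
  · exact (Real.continuous_exp.comp (by continuity)).intervalIntegrable _ _

set_option maxHeartbeats 1000000 in
/-- Laplace-type asymptotics: if `Ω` is `C²` with `|Ω'| ≤ M`, `|Ω''| ≤ M` and `Ω' ≤ -c₀ < 0`,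
then `∫_θ^{θ+1} e^{(Ω(s)-Ω(θ))/ε} ds = ε/(-Ω'(θ)) + O(ε² (log(1/ε))²)`, with constants
depending only on `M` and `c₀`. -/
theorem laplace_asymptotics_decreasing_phase
    (M c₀ : ℝ) (hM : 0 < M) (hc₀ : 0 < c₀) :
    ∃ C > (0:ℝ), ∃ ε₀ > (0:ℝ), ∀ Ω : ℝ → ℝ, ContDiff ℝ 2 Ω →
      (∀ θ, |deriv Ω θ| ≤ M) → (∀ θ, |deriv (deriv Ω) θ| ≤ M) →
      (∀ θ, deriv Ω θ ≤ -c₀) →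
      ∀ ε ∈ Set.Ioo (0:ℝ) ε₀, ∀ θ : ℝ,
        |(∫ s in θ..(θ + 1), Real.exp ((Ω s - Ω θ) / ε)) - ε / (-(deriv Ω θ))| ≤
          C * ε ^ 2 * (Real.log (1 / ε)) ^ 2 := by
  refine ⟨4*M/c₀^3 + 1/c₀ + 1, by positivity,
    min (Real.exp (-1)) (min ((c₀/32)^2) ((c₀^2/(32*M))^2)), by positivity, ?_⟩
  intro Ω hΩ hd1 hd2 hneg ε hε θ
  obtain ⟨hε0, hεlt⟩ := hε
  -- basic ε facts
  have hεe : ε < Real.exp (-1) := lt_of_lt_of_le hεlt (min_le_left _ _)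
  have hε1 : ε < 1 := lt_trans hεe (by
    calc Real.exp (-1) < Real.exp 0 := Real.exp_lt_exp.mpr (by norm_num)
      _ = 1 := Real.exp_zero)
  have hεs1 : ε < (c₀/32)^2 :=
    lt_of_lt_of_le hεlt (le_trans (min_le_right _ _) (min_le_left _ _))
  have hεs2 : ε < (c₀^2/(32*M))^2 :=
    lt_of_lt_of_le hεlt (le_trans (min_le_right _ _) (min_le_right _ _))
  set L := Real.log (1/ε) with hLdef
  have hL1 : 1 ≤ L := by
    have h : Real.exp 1 ≤ 1/ε := by
      rw [le_div_iff₀ hε0]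
      have h2 : Real.exp 1 * Real.exp (-1) = 1 := by
        rw [← Real.exp_add]; norm_num
      nlinarith [Real.exp_pos 1]
    calc (1:ℝ) = Real.log (Real.exp 1) := (Real.log_exp 1).symm
      _ ≤ L := (Real.log_le_log_iff (Real.exp_pos 1) (by positivity)).mpr h
  have hLpos : 0 < L := lt_of_lt_of_le one_pos hL1
  have hsqrt1 : Real.sqrt ε ≤ c₀/32 := by
    have h := Real.sqrt_le_sqrt hεs1.le
    rwa [Real.sqrt_sq (by positivity : (0:ℝ) ≤ c₀/32)] at h
  have hsqrt2 : Real.sqrt ε ≤ c₀^2/(32*M) := by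
    have h := Real.sqrt_le_sqrt hεs2.le
    rwa [Real.sqrt_sq (by positivity : (0:ℝ) ≤ c₀^2/(32*M))] at h
  have hεL : ε * L^2 ≤ 16 * Real.sqrt ε := aux_eps_log_sq hε0 hε1
  have hεL1 : ε * L ≤ ε * L^2 := by
    have hLL : L ≤ L^2 := by nlinarith
    exact mul_le_mul_of_nonneg_left hLL hε0.le
  set δ := 2/c₀ * (ε*L) with hδdef
  have hδpos : 0 < δ := mul_pos (by positivity) (mul_pos hε0 hLpos)
  have hδ1 : δ ≤ 1 := by
    have h1 : δ ≤ 2/c₀ * (16*Real.sqrt ε) := by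
      rw [hδdef]
      apply mul_le_mul_of_nonneg_left (le_trans hεL1 hεL) (by positivity)
    have h2 : 2/c₀ * (16*Real.sqrt ε) ≤ 2/c₀ * (16*(c₀/32)) := by
      apply mul_le_mul_of_nonneg_left _ (by positivity)
      linarith
    have h3 : 2/c₀ * (16*(c₀/32)) = 1 := by field_simp; linarith
    linarith
  have hMδ : M * δ^2 / (2*ε) ≤ 1 := by
    have e1 : M * δ^2/(2*ε) = (2*M/c₀^2) * (ε*L^2) := by
      rw [hδdef]; field_simp
    have e2 : (2*M/c₀^2) * (ε*L^2) ≤ (2*M/c₀^2)*(16*Real.sqrt ε) :=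
      mul_le_mul_of_nonneg_left hεL (by positivity)
    have e3 : (2*M/c₀^2)*(16*Real.sqrt ε) ≤ (2*M/c₀^2)*(16*(c₀^2/(32*M))) := by
      apply mul_le_mul_of_nonneg_left _ (by positivity)
      linarith
    have e4 : (2*M/c₀^2)*(16*(c₀^2/(32*M))) = 1 := by field_simp; ring
    linarith
  have hexp2L : Real.exp (-(2*L)) = ε^2 := by
    have h : -(2*L) = Real.log ε + Real.log ε := by
      rw [hLdef, one_div, Real.log_inv]; ring
    rw [h, Real.exp_add, Real.exp_log hε0]; ring
  -- facts about Ω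
  have hΩd : Differentiable ℝ Ω := hΩ.differentiable (by norm_num)
  have hΩ'c : Continuous (deriv Ω) := hΩ.continuous_deriv (by norm_num)
  have hΩ'cd : ContDiff ℝ 1 (deriv Ω) := by
    have h2 : ContDiff ℝ ((1:ℕ) + 1) Ω := by norm_num; exact hΩ
    exact (contDiff_succ_iff_deriv.mp h2).2.2
  have hΩ'd : Differentiable ℝ (deriv Ω) := hΩ'cd.differentiable (by norm_num)
  have lip : ∀ x y : ℝ, |deriv Ω y - deriv Ω x| ≤ M * |y - x| := by
    intro x y
    have h := convex_univ.norm_image_sub_le_of_norm_deriv_le (s := Set.univ) (f := deriv Ω)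
      (fun z _ => hΩ'd z) (fun z _ => by simpa using hd2 z)
      (Set.mem_univ x) (Set.mem_univ y)
    simpa [Real.norm_eq_abs] using h
  have hub : ∀ s, θ ≤ s → Ω s - Ω θ ≤ -c₀*(s-θ) := by
    intro s hs
    have heq : Ω s - Ω θ = ∫ u in θ..s, deriv Ω u :=
      (integral_deriv_eq_sub (fun x _ => hΩd x) (hΩ'c.intervalIntegrable _ _)).symm
    have hle : (∫ u in θ..s, deriv Ω u) ≤ ∫ u in θ..s, (-c₀ : ℝ) :=
      integral_mono_on hs (hΩ'c.intervalIntegrable _ _) intervalIntegrable_const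
        (fun u _ => hneg u)
    rw [intervalIntegral.integral_const, smul_eq_mul] at hle
    rw [heq]; linarith [hle]
  have taylor : ∀ s, θ ≤ s → |Ω s - Ω θ - deriv Ω θ * (s - θ)| ≤ M/2 * (s-θ)^2 := by
    intro s hs
    have heq1 : Ω s - Ω θ = ∫ u in θ..s, deriv Ω u :=
      (integral_deriv_eq_sub (fun x _ => hΩd x) (hΩ'c.intervalIntegrable _ _)).symm
    have heq2 : (∫ u in θ..s, deriv Ω θ) = deriv Ω θ * (s - θ) := by
      rw [intervalIntegral.integral_const, smul_eq_mul]; ring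
    have heq : Ω s - Ω θ - deriv Ω θ*(s-θ) = ∫ u in θ..s, (deriv Ω u - deriv Ω θ) := by
      rw [integral_sub (hΩ'c.intervalIntegrable _ _) intervalIntegrable_const, ← heq1, heq2]
    rw [heq]
    have h1 : |∫ u in θ..s, (deriv Ω u - deriv Ω θ)| ≤
        ∫ u in θ..s, |deriv Ω u - deriv Ω θ| := abs_integral_le_integral_abs hs
    have h2 : (∫ u in θ..s, |deriv Ω u - deriv Ω θ|) ≤ ∫ u in θ..s, M*(u-θ) := by
      apply integral_mono_on hs
        ((hΩ'c.sub continuous_const).abs.intervalIntegrable _ _)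
        ((continuous_const.mul (continuous_id.sub continuous_const)).intervalIntegrable _ _)
      intro u hu
      have := lip θ u
      rwa [abs_of_nonneg (by linarith [hu.1] : (0:ℝ) ≤ u - θ)] at this
    have h3 : (∫ u in θ..s, M*(u-θ)) = M/2*(s-θ)^2 := by
      rw [intervalIntegral.integral_const_mul]
      have h4 : (∫ u in θ..s, (u - θ)) = ∫ u in (θ-θ)..(s-θ), u :=
        integral_comp_sub_right (fun x => x) θ
      rw [h4, sub_self, integral_id]
      ring
    linarith
  -- set-up for the main estimate
  set a := deriv Ω θ / ε with hadef
  have hθM : deriv Ω θ ≤ -c₀ := hneg θ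
  have hdneg : deriv Ω θ < 0 := lt_of_le_of_lt hθM (by linarith)
  have ha_neg : a < 0 := div_neg_of_neg_of_pos hdneg hε0
  have ha_ne : a ≠ 0 := ne_of_lt ha_neg
  have hainv : 1/(-a) ≤ ε/c₀ := by
    have h1 : c₀/ε ≤ -a := by
      rw [hadef, ← neg_div]
      gcongr
      linarith
    have h2 : (0:ℝ) < c₀/ε := by positivity
    have h3 := one_div_le_one_div_of_le h2 h1
    rwa [one_div_div] at h3
  have hfc : Continuous (fun s => Real.exp ((Ω s - Ω θ)/ε)) :=
    Real.continuous_exp.comp ((hΩd.continuous.sub continuous_const).div_const ε)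
  have hgc : Continuous (fun s : ℝ => Real.exp (a*(s-θ))) :=
    Real.continuous_exp.comp (continuous_const.mul (continuous_id.sub continuous_const))
  have hint1 : IntervalIntegrable (fun s => Real.exp ((Ω s - Ω θ)/ε)) volume θ (θ+δ) :=
    hfc.intervalIntegrable _ _
  have hint2 : IntervalIntegrable (fun s => Real.exp ((Ω s - Ω θ)/ε)) volume (θ+δ) (θ+1) :=
    hfc.intervalIntegrable _ _
  have hsplit : (∫ s in θ..(θ+1), Real.exp ((Ω s - Ω θ)/ε)) =
      (∫ s in θ..(θ+δ), Real.exp ((Ω s - Ω θ)/ε))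
      + ∫ s in (θ+δ)..(θ+1), Real.exp ((Ω s - Ω θ)/ε) :=
    (integral_add_adjacent_intervals hint1 hint2).symm
  have hG : (∫ s in θ..(θ+δ), Real.exp (a*(s-θ))) = Real.exp (a*δ)/a - 1/a := by
    rw [aux_int_exp ha_ne θ (θ+δ)]
    have e1 : θ+δ-θ = δ := by ring
    rw [e1, sub_self, mul_zero, Real.exp_zero]
  have hεa : ε/(-(deriv Ω θ)) = -(1/a) := by
    rw [hadef]
    field_simp
  -- pointwise bound on the main interval
  have hpt : ∀ s ∈ Set.Icc θ (θ+δ),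
      |Real.exp ((Ω s - Ω θ)/ε) - Real.exp (a*(s-θ))| ≤
        Real.exp (a*(s-θ)) * (M*δ^2/ε) := by
    intro s hs
    obtain ⟨hs1, hs2⟩ := hs
    have hR : |Ω s - Ω θ - deriv Ω θ*(s-θ)| ≤ M/2*(s-θ)^2 := taylor s hs1
    have hsq : (s-θ)^2 ≤ δ^2 := pow_le_pow_left₀ (by linarith) (by linarith) 2
    have hRδ : |(Ω s - Ω θ - deriv Ω θ*(s-θ))/ε| ≤ M*δ^2/(2*ε) := by
      have hR2 : |Ω s - Ω θ - deriv Ω θ*(s-θ)| ≤ M*δ^2/2 := by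
        have h5 : M/2*(s-θ)^2 ≤ M/2*δ^2 := mul_le_mul_of_nonneg_left hsq (by linarith)
        linarith
      rw [abs_div, abs_of_pos hε0]
      have e : M*δ^2/(2*ε) = (M*δ^2/2)/ε := by ring
      rw [e]
      gcongr
    have hR1 : |(Ω s - Ω θ - deriv Ω θ*(s-θ))/ε| ≤ 1 := le_trans hRδ hMδ
    have hsplit2 : (Ω s - Ω θ)/ε = a*(s-θ) + (Ω s - Ω θ - deriv Ω θ*(s-θ))/ε := by
      rw [hadef]; field_simp; ring
    have heq : Real.exp ((Ω s - Ω θ)/ε) - Real.exp (a*(s-θ)) =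
        Real.exp (a*(s-θ)) * (Real.exp ((Ω s - Ω θ - deriv Ω θ*(s-θ))/ε) - 1) := by
      rw [hsplit2, Real.exp_add]; ring
    rw [heq, abs_mul, abs_of_pos (Real.exp_pos _)]
    apply mul_le_mul_of_nonneg_left _ (Real.exp_pos _).le
    calc |Real.exp ((Ω s - Ω θ - deriv Ω θ*(s-θ))/ε) - 1|
        ≤ 2*|(Ω s - Ω θ - deriv Ω θ*(s-θ))/ε| := Real.abs_exp_sub_one_le hR1
      _ ≤ 2*(M*δ^2/(2*ε)) := by linarith
      _ = M*δ^2/ε := by field_simp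
  -- T1
  have hT1 : |(∫ s in θ..(θ+δ), Real.exp ((Ω s - Ω θ)/ε))
      - ∫ s in θ..(θ+δ), Real.exp (a*(s-θ))| ≤ M*δ^2/c₀ := by
    have hgint : IntervalIntegrable (fun s => Real.exp (a*(s-θ))) volume θ (θ+δ) :=
      hgc.intervalIntegrable _ _
    rw [← integral_sub hint1 hgint]
    have h1 := abs_integral_le_integral_abs (μ := volume)
      (f := fun s => Real.exp ((Ω s - Ω θ)/ε) - Real.exp (a*(s-θ)))
      (a := θ) (b := θ+δ) (by linarith)
    have h2 : (∫ s in θ..(θ+δ), |Real.exp ((Ω s - Ω θ)/ε) - Real.exp (a*(s-θ))|)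
        ≤ ∫ s in θ..(θ+δ), Real.exp (a*(s-θ)) * (M*δ^2/ε) := by
      apply integral_mono_on (by linarith)
        ((hfc.sub hgc).abs.intervalIntegrable _ _)
        ((hgc.mul continuous_const).intervalIntegrable _ _) hpt
    have h3 : (∫ s in θ..(θ+δ), Real.exp (a*(s-θ)) * (M*δ^2/ε))
        = (Real.exp (a*δ)/a - 1/a)*(M*δ^2/ε) := by
      rw [intervalIntegral.integral_mul_const, hG]
    have h4 : Real.exp (a*δ)/a - 1/a ≤ 1/(-a) := by
      have h5 : Real.exp (a*δ)/a ≤ 0 :=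
        div_nonpos_of_nonneg_of_nonpos (Real.exp_pos _).le ha_neg.le
      have h6 : 1/(-a) = -(1/a) := by rw [div_neg]
      linarith
    have h7 : (0:ℝ) ≤ M*δ^2/ε := by positivity
    have h8 : (Real.exp (a*δ)/a - 1/a)*(M*δ^2/ε) ≤ (1/(-a))*(M*δ^2/ε) :=
      mul_le_mul_of_nonneg_right h4 h7
    have h9 : (1/(-a))*(M*δ^2/ε) ≤ (ε/c₀)*(M*δ^2/ε) :=
      mul_le_mul_of_nonneg_right hainv h7
    have h10 : (ε/c₀)*(M*δ^2/ε) = M*δ^2/c₀ := by field_simp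
    linarith
  -- T2
  have hT2 : |Real.exp (a*δ)/a| ≤ ε^2/c₀ := by
    have haδ : a*δ ≤ -(2*L) := by
      have e1 : a*δ = deriv Ω θ*(2*L)/c₀ := by
        rw [hadef, hδdef]; field_simp
      have h := mul_le_mul_of_nonneg_right hθM (by positivity : (0:ℝ) ≤ 2*L/c₀)
      have e2 : -c₀*(2*L/c₀) = -(2*L) := by field_simp
      have e3 : deriv Ω θ*(2*L/c₀) = deriv Ω θ*(2*L)/c₀ := by ring
      rw [e1]; linarith [e3 ▸ e2 ▸ h]
    have he : Real.exp (a*δ) ≤ ε^2 := by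
      rw [← hexp2L]; exact Real.exp_le_exp.mpr haδ
    rw [abs_div, abs_of_pos (Real.exp_pos _), abs_of_neg ha_neg]
    calc Real.exp (a*δ)/(-a) = Real.exp (a*δ) * (1/(-a)) := by ring
      _ ≤ ε^2 * (ε/c₀) := mul_le_mul he hainv (one_div_nonneg.mpr (by linarith)) (by positivity)
      _ ≤ ε^2 * (1/c₀) := by
          have h9 : ε/c₀ ≤ 1/c₀ := by gcongr <;> linarith
          exact mul_le_mul_of_nonneg_left h9 (by positivity)
      _ = ε^2/c₀ := by ring
  -- T3
  have hT3 : |∫ s in (θ+δ)..(θ+1), Real.exp ((Ω s - Ω θ)/ε)| ≤ ε^2 := by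
    have hb : ∀ s ∈ Set.uIoc (θ+δ) (θ+1), ‖Real.exp ((Ω s - Ω θ)/ε)‖ ≤ ε^2 := by
      intro s hs
      rw [Set.uIoc_of_le (by linarith : θ+δ ≤ θ+1)] at hs
      obtain ⟨hs1, hs2⟩ := hs
      have hθs : θ ≤ s := by linarith
      have h1 : (Ω s - Ω θ)/ε ≤ -(2*L) := by
        have h2 : Ω s - Ω θ ≤ -c₀*(s-θ) := hub s hθs
        have h3 : -c₀*(s-θ) ≤ -c₀*δ := by
          have h5 : c₀*δ ≤ c₀*(s-θ) := mul_le_mul_of_nonneg_left (by linarith) hc₀.le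
          linarith
        have h4 : -c₀*δ/ε = -(2*L) := by
          rw [hδdef]; field_simp
        calc (Ω s - Ω θ)/ε ≤ (-c₀*δ)/ε := by
              gcongr
              linarith
          _ = -(2*L) := h4
      rw [Real.norm_eq_abs, abs_of_pos (Real.exp_pos _)]
      calc Real.exp ((Ω s - Ω θ)/ε) ≤ Real.exp (-(2*L)) := Real.exp_le_exp.mpr h1
        _ = ε^2 := hexp2L
    have h := intervalIntegral.norm_integral_le_of_norm_le_const hb
    rw [Real.norm_eq_abs] at h
    have he : |θ+1-(θ+δ)| = 1 - δ := by
      rw [abs_of_nonneg (by linarith)]; ring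
    calc |∫ s in (θ+δ)..(θ+1), Real.exp ((Ω s - Ω θ)/ε)| ≤ ε^2 * |θ+1-(θ+δ)| := h
      _ = ε^2 * (1-δ) := by rw [he]
      _ ≤ ε^2 * 1 := mul_le_mul_of_nonneg_left (by linarith) (by positivity)
      _ = ε^2 := by ring
  -- assembly
  have hkey : (∫ s in θ..(θ+1), Real.exp ((Ω s - Ω θ)/ε)) - ε/(-(deriv Ω θ)) =
      ((∫ s in θ..(θ+δ), Real.exp ((Ω s - Ω θ)/ε))
        - ∫ s in θ..(θ+δ), Real.exp (a*(s-θ)))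
      + Real.exp (a*δ)/a + (∫ s in (θ+δ)..(θ+1), Real.exp ((Ω s - Ω θ)/ε)) := by
    rw [hsplit, hG, hεa]; ring
  have habs : |(∫ s in θ..(θ+1), Real.exp ((Ω s - Ω θ)/ε)) - ε/(-(deriv Ω θ))|
      ≤ M*δ^2/c₀ + ε^2/c₀ + ε^2 := by
    rw [hkey]
    calc |_ + Real.exp (a*δ)/a + _| ≤ _ := abs_add_three _ _ _
      _ ≤ M*δ^2/c₀ + ε^2/c₀ + ε^2 := add_le_add (add_le_add hT1 hT2) hT3
  have hδ2 : M*δ^2/c₀ = (4*M/c₀^3)*(ε^2*L^2) := by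
    rw [hδdef]; field_simp; ring
  have hA : ε^2 ≤ ε^2*L^2 := by nlinarith
  have hB : ε^2/c₀ ≤ 1/c₀*(ε^2*L^2) := by
    have h := mul_le_mul_of_nonneg_left hA (le_of_lt (one_div_pos.mpr hc₀))
    calc ε^2/c₀ = 1/c₀*ε^2 := by ring
      _ ≤ 1/c₀*(ε^2*L^2) := h
  have hfin : (4*M/c₀^3 + 1/c₀ + 1) * ε^2 * L^2 =
      (4*M/c₀^3)*(ε^2*L^2) + 1/c₀*(ε^2*L^2) + ε^2*L^2 := by ring
  rw [hfin]
  linarith [habs, hδ2 ▸ le_refl (M*δ^2/c₀)]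
end

section
/- Let W : ℝ → ℝ be three times continuously differentiable with W(0) = 0, W′(0) = 0, c ≤ W″(x) ≤ C and |W‴(x)| ≤ C for all x ∈ ℝ (with 0 < c ≤ C), and let g : ℝ → ℝ be Lipschitz with c ≤ g(x) ≤ C for all x. Then there exist C′ > 0 and ε₀ > 0 such that for all ε ∈ (0, ε₀): |∫_ℝ g(x)⁻²·e^{−W(x)/ε} dx − g(0)⁻²·√(2πε/W″(0))| ≤ C′·ε·(log(1/ε))^{3/2}. -/
open MeasureTheory Real
open scoped NNReal

open Set

lemma laplace_aux_moment1 {b : ℝ} (hb : 0 < b) :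
    ∫ x : ℝ, |x| * Real.exp (-b * x ^ 2) = 1 / b := by
  have key : ∫ x in Ioi (0:ℝ), x * Real.exp (-b * x ^ 2) = 1 / (2 * b) := by
    have hderiv : ∀ x ∈ Ici (0:ℝ),
        HasDerivAt (fun y : ℝ => -Real.exp (-b * y ^ 2) / (2 * b))
          (x * Real.exp (-b * x ^ 2)) x := by
      intro x _
      have h1 : HasDerivAt (fun y : ℝ => -b * y ^ 2) (-b * (2 * x)) x := by
        simpa using ((hasDerivAt_pow 2 x).const_mul (-b))
      have h2 : HasDerivAt (fun y : ℝ => -Real.exp (-b * y ^ 2) / (2 * b))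
          (-(Real.exp (-b * x ^ 2) * (-b * (2 * x))) / (2 * b)) x :=
        (h1.exp).neg.div_const (2 * b)
      convert h2 using 1
      field_simp
    have hint : IntegrableOn (fun x : ℝ => x * Real.exp (-b * x ^ 2)) (Ioi 0) :=
      (integrable_mul_exp_neg_mul_sq hb).integrableOn
    have htend : Filter.Tendsto (fun y : ℝ => -Real.exp (-b * y ^ 2) / (2 * b))
        Filter.atTop (nhds 0) := by
      have h1 : Filter.Tendsto (fun y : ℝ => -b * y ^ 2) Filter.atTop Filter.atBot :=
        (Filter.tendsto_pow_atTop (two_ne_zero)).const_mul_atTop_of_neg (neg_neg_iff_pos.mpr hb)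
      have h2 := (Real.tendsto_exp_atBot.comp h1).neg.div_const (2 * b)
      simpa using h2
    rw [integral_Ioi_of_hasDerivAt_of_tendsto' hderiv hint htend]
    norm_num
    ring
  have h := integral_comp_abs (f := fun t : ℝ => t * Real.exp (-b * t ^ 2))
  simp only [sq_abs] at h
  rw [h, key]; field_simp

lemma laplace_aux_moment3 {b : ℝ} (hb : 0 < b) :
    ∫ x : ℝ, |x| ^ 3 * Real.exp (-b * x ^ 2) = 1 / b ^ 2 := by
  have hbne : b ≠ 0 := hb.ne'
  have key : ∫ x in Ioi (0:ℝ), x ^ 3 * Real.exp (-b * x ^ 2) = 1 / (2 * b ^ 2) := by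
    have hderiv : ∀ x ∈ Ici (0:ℝ),
        HasDerivAt (fun y : ℝ => -((b * y ^ 2 + 1) * Real.exp (-b * y ^ 2)) / (2 * b ^ 2))
          (x ^ 3 * Real.exp (-b * x ^ 2)) x := by
      intro x _
      have h1 : HasDerivAt (fun y : ℝ => -b * y ^ 2) (-b * (2 * x)) x := by
        simpa using ((hasDerivAt_pow 2 x).const_mul (-b))
      have hpoly : HasDerivAt (fun y : ℝ => b * y ^ 2 + 1) (b * (2 * x)) x := by
        simpa using (((hasDerivAt_pow 2 x).const_mul b).add_const 1)
      have h2 : HasDerivAt (fun y : ℝ => -((b * y ^ 2 + 1) * Real.exp (-b * y ^ 2)) / (2 * b ^ 2))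
          (-(b * (2 * x) * Real.exp (-b * x ^ 2) + (b * x ^ 2 + 1) * (Real.exp (-b * x ^ 2) * (-b * (2 * x))))
            / (2 * b ^ 2)) x :=
        ((hpoly.mul h1.exp).neg).div_const (2 * b ^ 2)
      convert h2 using 1
      field_simp
      ring
    have hint : IntegrableOn (fun x : ℝ => x ^ 3 * Real.exp (-b * x ^ 2)) (Ioi 0) := by
      refine (integrableOn_rpow_mul_exp_neg_mul_sq hb (by norm_num : (-1:ℝ) < 3)).congr_fun
        (fun x _ => ?_) measurableSet_Ioi
      rw [show ((3:ℝ) = ((3:ℕ):ℝ)) by norm_num]; beta_reduce; rw [Real.rpow_natCast]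
    have htend : Filter.Tendsto
        (fun y : ℝ => -((b * y ^ 2 + 1) * Real.exp (-b * y ^ 2)) / (2 * b ^ 2))
        Filter.atTop (nhds 0) := by
      have h0 : Filter.Tendsto (fun t : ℝ => (t + 1) * Real.exp (-t)) Filter.atTop (nhds 0) := by
        have := (tendsto_pow_mul_exp_neg_atTop_nhds_zero 1).add
          Real.tendsto_exp_neg_atTop_nhds_zero
        simpa [add_mul] using this
      have h1 : Filter.Tendsto (fun y : ℝ => b * y ^ 2) Filter.atTop Filter.atTop :=
        (Filter.tendsto_pow_atTop two_ne_zero).const_mul_atTop hb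
      have h2 := ((h0.comp h1).neg).div_const (2 * b ^ 2)
      simpa [Function.comp_def, neg_mul] using h2
    rw [integral_Ioi_of_hasDerivAt_of_tendsto' hderiv hint htend]
    norm_num
    ring
  have h := integral_comp_abs (f := fun t : ℝ => t ^ 3 * Real.exp (-b * t ^ 2))
  simp only [sq_abs] at h
  rw [h, key]; field_simp

lemma laplace_aux_poly_bound (f : ℝ → ℝ) (K : ℝ) (n : ℕ) (hf : Differentiable ℝ f)
    (hcont : Continuous (deriv f)) (h0 : f 0 = 0)
    (hd : ∀ x, |deriv f x| ≤ K * |x| ^ n) (x : ℝ) :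
    |f x| ≤ K * |x| ^ (n + 1) / (n + 1) := by
  have hFTC : ∫ t in (0:ℝ)..x, deriv f t = f x - f 0 :=
    intervalIntegral.integral_deriv_eq_sub (fun t _ => (hf t))
      (hcont.intervalIntegrable 0 x)
  have hfx : f x = ∫ t in (0:ℝ)..x, deriv f t := by rw [hFTC, h0, sub_zero]
  rcases le_total 0 x with hx | hx
  · have h1 : |∫ t in (0:ℝ)..x, deriv f t| ≤ ∫ t in (0:ℝ)..x, |deriv f t| := by
      simpa [Real.norm_eq_abs] using
        intervalIntegral.norm_integral_le_integral_norm (f := deriv f) hx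
    have h2 : ∫ t in (0:ℝ)..x, |deriv f t| ≤ ∫ t in (0:ℝ)..x, K * t ^ n := by
      refine intervalIntegral.integral_mono_on hx (hcont.abs.intervalIntegrable 0 x)
        ((continuous_const.mul (continuous_pow n)).intervalIntegrable 0 x) (fun t ht => ?_)
      have h := hd t
      rwa [abs_of_nonneg ht.1] at h
    have h3 : ∫ t in (0:ℝ)..x, K * t ^ n = K * x ^ (n + 1) / (n + 1) := by
      rw [intervalIntegral.integral_const_mul, integral_pow]
      norm_num
      ring
    rw [hfx]
    refine h1.trans (h2.trans ?_)
    rw [h3, abs_of_nonneg hx]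
  · have hsymm : |∫ t in (0:ℝ)..x, deriv f t| = |∫ t in x..(0:ℝ), deriv f t| := by
      rw [intervalIntegral.integral_symm, abs_neg]
    have h1 : |∫ t in x..(0:ℝ), deriv f t| ≤ ∫ t in x..(0:ℝ), |deriv f t| := by
      simpa [Real.norm_eq_abs] using
        intervalIntegral.norm_integral_le_integral_norm (f := deriv f) hx
    have h2 : ∫ t in x..(0:ℝ), |deriv f t| ≤ ∫ t in x..(0:ℝ), K * (-t) ^ n := by
      refine intervalIntegral.integral_mono_on hx (hcont.abs.intervalIntegrable x 0)
        ((continuous_const.mul ((continuous_neg).pow n)).intervalIntegrable x 0) (fun t ht => ?_)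
      have h := hd t
      rwa [abs_of_nonpos ht.2] at h
    have h3 : ∫ t in x..(0:ℝ), K * (-t) ^ n = K * (-x) ^ (n + 1) / (n + 1) := by
      rw [intervalIntegral.integral_comp_neg (fun t => K * t ^ n),
        intervalIntegral.integral_const_mul, integral_pow]
      norm_num
      ring
    rw [hfx, hsymm]
    refine h1.trans (h2.trans ?_)
    rw [h3, abs_of_nonpos hx]

set_option maxHeartbeats 1000000 in
/-- Laplace method for the normalizing constant of the invariant density:
`∫_ℝ g(x)⁻² e^{-W(x)/ε} dx = g(0)⁻² √(2πε/W''(0)) + O(ε (log(1/ε))^{3/2})`. -/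
theorem laplace_normalizing_constant
    (c C : ℝ) (hc : 0 < c) (hcC : c ≤ C)
    (W g : ℝ → ℝ) (hW : ContDiff ℝ 3 W) (hW0 : W 0 = 0) (hW'0 : deriv W 0 = 0)
    (hW''c : ∀ x, c ≤ deriv (deriv W) x) (hW''C : ∀ x, deriv (deriv W) x ≤ C)
    (hW''' : ∀ x, |deriv (deriv (deriv W)) x| ≤ C)
    (L : ℝ≥0) (hg : LipschitzWith L g) (hgc : ∀ x, c ≤ g x) (hgC : ∀ x, g x ≤ C) :
    ∃ C' > (0:ℝ), ∃ ε₀ > (0:ℝ), ∀ ε ∈ Set.Ioo (0:ℝ) ε₀,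
      |(∫ x : ℝ, ((g x) ^ 2)⁻¹ * Real.exp (-W x / ε)) -
          ((g 0) ^ 2)⁻¹ * Real.sqrt (2 * Real.pi * ε / deriv (deriv W) 0)| ≤
        C' * ε * (Real.log (1 / ε)) ^ ((3:ℝ) / 2) := by
  set a : ℝ := deriv (deriv W) 0 with ha_def
  have hca : c ≤ a := hW''c 0
  clear_value a
  have ha : 0 < a := hc.trans_le hca
  have hC : 0 < C := hc.trans_le hcC
  -- differentiability structure
  have hWd : Differentiable ℝ W := hW.differentiable (by norm_num)
  have hW1 : ContDiff ℝ 2 (deriv W) := by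
    have h : ContDiff ℝ (2 + 1 : ℕ) W := hW
    exact (contDiff_succ_iff_deriv.mp h).2.2
  have hW1d : Differentiable ℝ (deriv W) := hW1.differentiable (by norm_num)
  have hW2 : ContDiff ℝ 1 (deriv (deriv W)) := by
    have h : ContDiff ℝ (1 + 1 : ℕ) (deriv W) := hW1
    exact (contDiff_succ_iff_deriv.mp h).2.2
  have hW2d : Differentiable ℝ (deriv (deriv W)) := hW2.differentiable (by norm_num)
  have hW3c : Continuous (deriv (deriv (deriv W))) := hW2.continuous_deriv le_rfl
  have hW2c : Continuous (deriv (deriv W)) := hW2.continuous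
  have hW1c : Continuous (deriv W) := hW1.continuous
  have hWc : Continuous W := hW.continuous
  -- Taylor estimates
  have e2 : deriv (fun y => deriv (deriv W) y - a) = fun y => deriv (deriv (deriv W)) y := by
    funext y; exact deriv_sub_const a
  have taylor2 : ∀ x, |deriv (deriv W) x - a| ≤ C * |x| := by
    intro x
    have h := laplace_aux_poly_bound (fun y => deriv (deriv W) y - a) C 0
      (hW2d.sub_const a) (by rw [e2]; exact hW3c) (by simp [ha_def])
      (fun y => by rw [e2]; simpa using hW''' y) x
    simpa using h
  have e1 : deriv (fun y => deriv W y - a * y) = fun y => deriv (deriv W) y - a := by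
    funext y
    rw [deriv_fun_sub (hW1d y) (by fun_prop),
      show deriv (fun y : ℝ => a * y) y = a by simpa using ((hasDerivAt_id y).const_mul a).deriv]
  have taylor1 : ∀ x, |deriv W x - a * x| ≤ C * |x| ^ 2 / 2 := by
    intro x
    have h := laplace_aux_poly_bound (fun y => deriv W y - a * y) C 1
      (hW1d.sub (by fun_prop)) (by rw [e1]; exact hW2c.sub continuous_const) (by simp [hW'0])
      (fun y => by rw [e1]; simpa using taylor2 y) x
    norm_num at h
    rw [sq_abs]
    linarith
  have e0 : deriv (fun y => W y - a * y ^ 2 / 2) = fun y => deriv W y - a * y := by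
    funext y
    rw [deriv_fun_sub (hWd y) (by fun_prop)]
    congr 1
    rw [deriv_div_const, deriv_const_mul _ (differentiableAt_pow 2)]
    simp [deriv_pow]
    ring
  have taylor0 : ∀ x, |W x - a * x ^ 2 / 2| ≤ C * |x| ^ 3 / 6 := by
    intro x
    have h := laplace_aux_poly_bound (fun y => W y - a * y ^ 2 / 2) (C / 2) 2
      (hWd.sub (by fun_prop)) (by rw [e0]; exact hW1c.sub (by fun_prop)) (by simp [hW0])
      (fun y => by rw [e0]; have := taylor1 y; linarith) x
    norm_num at h
    linarith
  -- lower bound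
  have e1c : deriv (fun y => deriv W y - c * y) = fun y => deriv (deriv W) y - c := by
    funext y
    rw [deriv_fun_sub (hW1d y) (by fun_prop),
      show deriv (fun y : ℝ => c * y) y = c by simpa using ((hasDerivAt_id y).const_mul c).deriv]
  have hφmono : Monotone (fun y => deriv W y - c * y) := by
    refine monotone_of_deriv_nonneg (hW1d.sub (by fun_prop)) (fun y => ?_)
    rw [e1c]
    have := hW''c y
    simp only
    linarith
  have hW1low : ∀ x, 0 ≤ x → c * x ≤ deriv W x := by
    intro x hx
    have := hφmono hx
    simp only [hW'0, mul_zero, sub_zero] at this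
    linarith [this]
  have hW1up : ∀ x, x ≤ 0 → deriv W x ≤ c * x := by
    intro x hx
    have := hφmono hx
    simp only [hW'0, mul_zero, sub_zero] at this
    linarith [this]
  have eψ : deriv (fun y => W y - c / 2 * y ^ 2) = fun y => deriv W y - c * y := by
    funext y
    rw [deriv_fun_sub (hWd y) (by fun_prop)]
    congr 1
    rw [deriv_const_mul _ (differentiableAt_pow 2)]
    simp [deriv_pow]
    ring
  have hψd : Differentiable ℝ (fun y => W y - c / 2 * y ^ 2) := hWd.sub (by fun_prop)
  have lower : ∀ x, c / 2 * x ^ 2 ≤ W x := by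
    have hmono : MonotoneOn (fun y => W y - c / 2 * y ^ 2) (Ici 0) := by
      refine monotoneOn_of_deriv_nonneg (convex_Ici 0) (hψd.continuous.continuousOn)
        (hψd.differentiableOn) (fun y hy => ?_)
      rw [eψ]
      rw [interior_Ici] at hy
      have := hW1low y (le_of_lt hy)
      simp only
      linarith
    have hanti : AntitoneOn (fun y => W y - c / 2 * y ^ 2) (Iic 0) := by
      refine antitoneOn_of_deriv_nonpos (convex_Iic 0) (hψd.continuous.continuousOn)
        (hψd.differentiableOn) (fun y hy => ?_)
      rw [eψ]
      rw [interior_Iic] at hy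
      have := hW1up y (le_of_lt hy)
      simp only
      linarith
    intro x
    rcases le_total 0 x with hx | hx
    · have := hmono (self_mem_Ici) hx hx
      simp only [hW0] at this
      linarith
    · have := hanti hx (self_mem_Iic) hx
      simp only [hW0] at this
      linarith
  -- exp difference bound
  have expdiff : ∀ u v m : ℝ, m ≤ u → m ≤ v →
      |Real.exp (-u) - Real.exp (-v)| ≤ |u - v| * Real.exp (-m) := by
    have key : ∀ u v m : ℝ, m ≤ u → m ≤ v → u ≤ v →
        |Real.exp (-u) - Real.exp (-v)| ≤ |u - v| * Real.exp (-m) := by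
      intro u v m hu hv huv
      have h1 : Real.exp (-v) ≤ Real.exp (-u) := Real.exp_le_exp.mpr (by linarith)
      rw [abs_of_nonneg (by linarith), abs_of_nonpos (by linarith)]
      have h2 : Real.exp (-v) = Real.exp (-u) * Real.exp (-(v - u)) := by
        rw [← Real.exp_add]; ring_nf
      have h3 : 1 - (v - u) ≤ Real.exp (-(v - u)) := by
        have := Real.add_one_le_exp (-(v - u))
        linarith
      have h4 : Real.exp (-u) - Real.exp (-v) ≤ Real.exp (-u) * (v - u) := by
        rw [h2]
        have := Real.exp_pos (-u)
        nlinarith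
      have h5 : Real.exp (-u) ≤ Real.exp (-m) := Real.exp_le_exp.mpr (by linarith)
      have h6 : 0 ≤ v - u := by linarith
      nlinarith [Real.exp_pos (-u), Real.exp_pos (-m)]
    intro u v m hu hv
    rcases le_total u v with huv | huv
    · exact key u v m hu hv huv
    · have := key v u m hv hu huv
      rwa [abs_sub_comm (Real.exp (-v)), abs_sub_comm v u] at this
  refine ⟨4 * C * L / c ^ 5 + 2 * C / (3 * c ^ 4) + 1, by positivity,
    Real.exp (-1), Real.exp_pos _, ?_⟩
  rintro ε ⟨hε0, hε1⟩
  set b0 : ℝ := c / (2 * ε) with hb0_def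
  have hb0 : 0 < b0 := by positivity
  clear_value b0
  have hg0 : c ≤ g 0 := hgc 0
  have hg0pos : 0 < g 0 := hc.trans_le hg0
  have hgxpos : ∀ x, 0 < g x := fun x => hc.trans_le (hgc x)
  have hgauss_int : Integrable (fun x : ℝ => ((g 0) ^ 2)⁻¹ * Real.exp (-(a / (2 * ε)) * x ^ 2)) :=
    (integrable_exp_neg_mul_sq (by positivity)).const_mul _
  have hT : ∫ x : ℝ, ((g 0) ^ 2)⁻¹ * Real.exp (-(a / (2 * ε)) * x ^ 2)
      = ((g 0) ^ 2)⁻¹ * Real.sqrt (2 * Real.pi * ε / a) := by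
    rw [integral_const_mul, integral_gaussian]
    congr 2
    field_simp
  have hdom : ∀ x, Real.exp (-W x / ε) ≤ Real.exp (-b0 * x ^ 2) := by
    intro x
    apply Real.exp_le_exp.mpr
    rw [hb0_def, neg_div, neg_mul, neg_le_neg_iff]
    calc c / (2 * ε) * x ^ 2 = (c / 2 * x ^ 2) / ε := by ring
      _ ≤ W x / ε := by gcongr; exact lower x
  have hfmeas : AEStronglyMeasurable (fun x : ℝ => ((g x) ^ 2)⁻¹ * Real.exp (-W x / ε)) volume := by
    apply Continuous.aestronglyMeasurable
    exact (Continuous.inv₀ (hg.continuous.pow 2)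
        (fun x => pow_ne_zero 2 (hgxpos x).ne')).mul
      (Real.continuous_exp.comp ((hWc.neg).div_const ε))
  have hfint : Integrable (fun x : ℝ => ((g x) ^ 2)⁻¹ * Real.exp (-W x / ε)) := by
    refine Integrable.mono' ((integrable_exp_neg_mul_sq hb0).const_mul ((c ^ 2)⁻¹)) hfmeas
      (Filter.Eventually.of_forall (fun x => ?_))
    have h1 : ((g x) ^ 2)⁻¹ ≤ (c ^ 2)⁻¹ := by
      apply inv_anti₀ (by positivity)
      nlinarith [hgc x]
    rw [Real.norm_eq_abs, abs_of_nonneg (by positivity)]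
    exact mul_le_mul h1 (hdom x) (Real.exp_pos _).le (by positivity)
  have hpt : ∀ x, |((g x) ^ 2)⁻¹ * Real.exp (-W x / ε) -
      ((g 0) ^ 2)⁻¹ * Real.exp (-(a / (2 * ε)) * x ^ 2)|
      ≤ (2 * C * L / c ^ 4) * (|x| * Real.exp (-b0 * x ^ 2))
        + (C / (6 * ε * c ^ 2)) * (|x| ^ 3 * Real.exp (-b0 * x ^ 2)) := by
    intro x
    have hgx := hgc x
    have hgx2 : (0:ℝ) < g x ^ 2 := pow_pos (hgxpos x) 2
    have hg02 : (0:ℝ) < g 0 ^ 2 := pow_pos hg0pos 2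
    have hsplit : ((g x) ^ 2)⁻¹ * Real.exp (-W x / ε)
          - ((g 0) ^ 2)⁻¹ * Real.exp (-(a / (2 * ε)) * x ^ 2)
        = (((g x) ^ 2)⁻¹ - ((g 0) ^ 2)⁻¹) * Real.exp (-W x / ε)
          + ((g 0) ^ 2)⁻¹ * (Real.exp (-W x / ε) - Real.exp (-(a / (2 * ε)) * x ^ 2)) := by
      ring
    rw [hsplit]
    have hA : |(((g x) ^ 2)⁻¹ - ((g 0) ^ 2)⁻¹) * Real.exp (-W x / ε)|
        ≤ (2 * C * L / c ^ 4) * (|x| * Real.exp (-b0 * x ^ 2)) := by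
      rw [abs_mul, abs_of_nonneg (Real.exp_pos _).le]
      have h1 : |g 0 - g x| ≤ L * |x| := by
        have h := hg.dist_le_mul 0 x
        rw [Real.dist_eq, Real.dist_eq] at h
        simpa using h
      have h2 : |g 0 + g x| ≤ 2 * C := by
        have := hgC 0
        have := hgC x
        rw [abs_of_nonneg (by linarith [(hgxpos 0).le, (hgxpos x).le])]
        linarith
      have hnum : |g 0 ^ 2 - g x ^ 2| ≤ (L * |x|) * (2 * C) := by
        calc |g 0 ^ 2 - g x ^ 2| = |g 0 - g x| * |g 0 + g x| := by
              rw [← abs_mul]; ring_nf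
          _ ≤ (L * |x|) * (2 * C) := mul_le_mul h1 h2 (abs_nonneg _) (by positivity)
      have hinv : |((g x) ^ 2)⁻¹ - ((g 0) ^ 2)⁻¹| ≤ ((L * |x|) * (2 * C)) / c ^ 4 := by
        rw [inv_sub_inv (ne_of_gt hgx2) (ne_of_gt hg02), abs_div,
          abs_of_pos (mul_pos hgx2 hg02)]
        refine div_le_div₀ (by positivity) hnum (by positivity) ?_
        have hax : c ^ 2 ≤ g x ^ 2 := by nlinarith
        have ha0 : c ^ 2 ≤ g 0 ^ 2 := by nlinarith [hgc 0]
        calc c ^ 4 = c ^ 2 * c ^ 2 := by ring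
          _ ≤ g x ^ 2 * g 0 ^ 2 := mul_le_mul hax ha0 (by positivity) (by positivity)
      calc |((g x) ^ 2)⁻¹ - ((g 0) ^ 2)⁻¹| * Real.exp (-W x / ε)
          ≤ ((L * |x|) * (2 * C)) / c ^ 4 * Real.exp (-b0 * x ^ 2) :=
            mul_le_mul hinv (hdom x) (Real.exp_pos _).le (by positivity)
        _ = (2 * C * L / c ^ 4) * (|x| * Real.exp (-b0 * x ^ 2)) := by ring
    have hB : |((g 0) ^ 2)⁻¹ * (Real.exp (-W x / ε) - Real.exp (-(a / (2 * ε)) * x ^ 2))|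
        ≤ (C / (6 * ε * c ^ 2)) * (|x| ^ 3 * Real.exp (-b0 * x ^ 2)) := by
      rw [abs_mul, abs_of_nonneg (inv_nonneg.mpr hg02.le)]
      have hu : b0 * x ^ 2 ≤ W x / ε := by
        rw [hb0_def]
        calc c / (2 * ε) * x ^ 2 = (c / 2 * x ^ 2) / ε := by ring
          _ ≤ W x / ε := by gcongr; exact lower x
      have hv : b0 * x ^ 2 ≤ (a / (2 * ε)) * x ^ 2 := by
        rw [hb0_def]
        have : c / (2 * ε) ≤ a / (2 * ε) := by gcongr
        exact mul_le_mul_of_nonneg_right this (sq_nonneg x)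
      have h1 : |Real.exp (-W x / ε) - Real.exp (-(a / (2 * ε)) * x ^ 2)|
          ≤ |W x / ε - (a / (2 * ε)) * x ^ 2| * Real.exp (-(b0 * x ^ 2)) := by
        rw [neg_div, neg_mul]
        exact expdiff _ _ _ hu hv
      have h2 : |W x / ε - (a / (2 * ε)) * x ^ 2| ≤ (C * |x| ^ 3 / 6) / ε := by
        rw [show W x / ε - (a / (2 * ε)) * x ^ 2 = (W x - a * x ^ 2 / 2) / ε by
            field_simp,
          abs_div, abs_of_pos hε0]
        gcongr
        exact taylor0 x
      calc ((g 0) ^ 2)⁻¹ * |Real.exp (-W x / ε) - Real.exp (-(a / (2 * ε)) * x ^ 2)|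
          ≤ (c ^ 2)⁻¹ * ((C * |x| ^ 3 / 6) / ε * Real.exp (-(b0 * x ^ 2))) := by
            refine mul_le_mul ?_ (h1.trans ?_) (abs_nonneg _) (by positivity)
            · apply inv_anti₀ (by positivity)
              nlinarith [hg0]
            · exact mul_le_mul_of_nonneg_right h2 (Real.exp_pos _).le
        _ = (C / (6 * ε * c ^ 2)) * (|x| ^ 3 * Real.exp (-b0 * x ^ 2)) := by
            rw [neg_mul]
            field_simp
    exact (abs_add_le _ _).trans (add_le_add hA hB)
  have hint1 : Integrable (fun x : ℝ => |x| * Real.exp (-b0 * x ^ 2)) :=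
    ((integrable_mul_exp_neg_mul_sq hb0).abs).congr
      (Filter.Eventually.of_forall (fun x => by
        simp [abs_mul, abs_of_pos (Real.exp_pos _)]))
  have hint3 : Integrable (fun x : ℝ => |x| ^ 3 * Real.exp (-b0 * x ^ 2)) := by
    have h := (integrable_rpow_mul_exp_neg_mul_sq hb0 (by norm_num : (-1:ℝ) < 3)).abs
    refine h.congr (Filter.Eventually.of_forall (fun x => ?_))
    have h3 : x ^ ((3:ℕ):ℝ) = x ^ (3:ℕ) := Real.rpow_natCast x 3
    have h3' : ((3:ℕ):ℝ) = (3:ℝ) := by norm_num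
    rw [h3'] at h3
    simp only [h3, abs_mul, abs_pow, abs_of_pos (Real.exp_pos _)]
  have hsub := hfint.sub hgauss_int
  have hlog : 1 ≤ Real.log (1 / ε) := by
    have h2 : Real.exp (-1) * Real.exp 1 = 1 := by
      rw [← Real.exp_add]; norm_num
    have h1 : ε * Real.exp 1 ≤ 1 := by
      nlinarith [Real.exp_pos (1:ℝ), hε1.le]
    rw [Real.le_log_iff_exp_le (by positivity), le_div_iff₀ hε0]
    linarith
  have hr : 1 ≤ (Real.log (1 / ε)) ^ ((3:ℝ) / 2) := Real.one_le_rpow hlog (by norm_num)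
  calc |(∫ x : ℝ, ((g x) ^ 2)⁻¹ * Real.exp (-W x / ε))
        - ((g 0) ^ 2)⁻¹ * Real.sqrt (2 * Real.pi * ε / a)|
      = |∫ x : ℝ, (((g x) ^ 2)⁻¹ * Real.exp (-W x / ε)
          - ((g 0) ^ 2)⁻¹ * Real.exp (-(a / (2 * ε)) * x ^ 2))| := by
        rw [integral_sub hfint hgauss_int, hT]
    _ ≤ ∫ x : ℝ, |((g x) ^ 2)⁻¹ * Real.exp (-W x / ε)
          - ((g 0) ^ 2)⁻¹ * Real.exp (-(a / (2 * ε)) * x ^ 2)| := by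
        have h := norm_integral_le_integral_norm (μ := volume)
          (fun x : ℝ => ((g x) ^ 2)⁻¹ * Real.exp (-W x / ε)
            - ((g 0) ^ 2)⁻¹ * Real.exp (-(a / (2 * ε)) * x ^ 2))
        simp only [Real.norm_eq_abs] at h
        exact h
    _ ≤ ∫ x : ℝ, ((2 * C * L / c ^ 4) * (|x| * Real.exp (-b0 * x ^ 2))
          + (C / (6 * ε * c ^ 2)) * (|x| ^ 3 * Real.exp (-b0 * x ^ 2))) :=
        integral_mono hsub.abs ((hint1.const_mul _).add (hint3.const_mul _)) hpt
    _ = (2 * C * L / c ^ 4) * (1 / b0) + (C / (6 * ε * c ^ 2)) * (1 / b0 ^ 2) := by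
        rw [integral_add (hint1.const_mul _) (hint3.const_mul _), integral_const_mul,
          integral_const_mul, laplace_aux_moment1 hb0, laplace_aux_moment3 hb0]
    _ = (4 * C * L / c ^ 5 + 2 * C / (3 * c ^ 4)) * ε := by
        rw [hb0_def]
        field_simp
        ring
    _ ≤ (4 * C * L / c ^ 5 + 2 * C / (3 * c ^ 4) + 1) * ε
          * (Real.log (1 / ε)) ^ ((3:ℝ) / 2) := by
        have hM : (0:ℝ) ≤ 4 * C * L / c ^ 5 + 2 * C / (3 * c ^ 4) := by positivity
        have hstep : (4 * C * L / c ^ 5 + 2 * C / (3 * c ^ 4) + 1) * ε * 1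
            ≤ (4 * C * L / c ^ 5 + 2 * C / (3 * c ^ 4) + 1) * ε
              * (Real.log (1 / ε)) ^ ((3:ℝ) / 2) := by
          refine mul_le_mul_of_nonneg_left hr (by positivity)
        nlinarith
end

section
/- Let μ and ν be Borel probability measures on ℝ, let ε > 0, and for n ∈ ℤ let I_n = [nε, (n+1)ε). Then there exists a Borel probability measure γ on ℝ × ℝ whose first marginal is μ and whose second marginal is ν, such that γ({(x,y) : |x − y| ≥ ε}) ≤ (1/2)·Σ_{n∈ℤ} |μ(I_n) − ν(I_n)|. -/
open MeasureTheory

open scoped ENNReal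

/-- Binning coupling: two probability measures on `ℝ` can be coupled so that the probability
that the two coordinates differ by at least `ε` is bounded by half of the total discrepancy of
the masses of the bins `[nε, (n+1)ε)`. -/
theorem exists_binning_coupling
    (μ ν : Measure ℝ) [IsProbabilityMeasure μ] [IsProbabilityMeasure ν]
    (ε : ℝ) (hε : 0 < ε) :
    ∃ γ : Measure (ℝ × ℝ), IsProbabilityMeasure γ ∧
      γ.map Prod.fst = μ ∧ γ.map Prod.snd = ν ∧
      (γ {p : ℝ × ℝ | ε ≤ |p.1 - p.2|}).toReal ≤
        (1 / 2) * ∑' n : ℤ,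
          |(μ (Set.Ico ((n : ℝ) * ε) (((n : ℝ) + 1) * ε))).toReal -
            (ν (Set.Ico ((n : ℝ) * ε) (((n : ℝ) + 1) * ε))).toReal| := by
  classical
  set I : ℤ → Set ℝ := fun n => Set.Ico ((n : ℝ) * ε) (((n : ℝ) + 1) * ε) with hI
  have hImeas : ∀ n, MeasurableSet (I n) := fun n => measurableSet_Ico
  have hmem : ∀ (x : ℝ) (n : ℤ), x ∈ I n ↔ ⌊x / ε⌋ = n := by
    intro x n
    rw [hI]
    simp only [Set.mem_Ico, Int.floor_eq_iff]
    rw [le_div_iff₀ hε, div_lt_iff₀ hε]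
  have hdisj : Pairwise (Function.onFun Disjoint I) := by
    intro p q hpq
    simp only [Function.onFun, Set.disjoint_left]
    intro x hxp hxq
    exact hpq (((hmem x p).1 hxp).symm.trans ((hmem x q).1 hxq))
  have hunion : (⋃ n, I n) = Set.univ := by
    ext x
    simp only [Set.mem_iUnion, Set.mem_univ, iff_true]
    exact ⟨⌊x / ε⌋, (hmem x _).2 rfl⟩
  set a : ℤ → ℝ≥0∞ := fun n => μ (I n) with ha
  set b : ℤ → ℝ≥0∞ := fun n => ν (I n) with hb
  set m : ℤ → ℝ≥0∞ := fun n => min (a n) (b n) with hm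
  have ham : ∀ n, m n ≤ a n := fun n => min_le_left _ _
  have hbm : ∀ n, m n ≤ b n := fun n => min_le_right _ _
  have haT : ∀ n, a n ≠ ∞ := fun n => measure_ne_top μ _
  have hbT : ∀ n, b n ≠ ∞ := fun n => measure_ne_top ν _
  -- decomposition of μ and ν along the bins
  have hμdecomp : Measure.sum (fun n => μ.restrict (I n)) = μ := by
    rw [← Measure.restrict_iUnion hdisj hImeas, hunion, Measure.restrict_univ]
  have hνdecomp : Measure.sum (fun n => ν.restrict (I n)) = ν := by
    rw [← Measure.restrict_iUnion hdisj hImeas, hunion, Measure.restrict_univ]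
  -- matched and remainder pieces
  set μd : ℤ → Measure ℝ := fun n => (m n / a n) • μ.restrict (I n) with hμd
  set μr : ℤ → Measure ℝ := fun n => ((a n - m n) / a n) • μ.restrict (I n) with hμr
  set νd : ℤ → Measure ℝ := fun n => (m n / b n) • ν.restrict (I n) with hνd
  set νr : ℤ → Measure ℝ := fun n => ((b n - m n) / b n) • ν.restrict (I n) with hνr
  set μrem : Measure ℝ := Measure.sum μr with hμrem
  set νrem : Measure ℝ := Measure.sum νr with hνrem
  have hμsplit : ∀ n, μd n + μr n = μ.restrict (I n) := by
    intro n
    by_cases h0 : a n = 0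
    · have hres : μ.restrict (I n) = 0 := Measure.restrict_eq_zero.mpr h0
      simp [hμd, hμr, hres]
    · simp only [hμd, hμr, ← add_smul]
      rw [ENNReal.div_add_div_same, add_tsub_cancel_of_le (ham n),
        ENNReal.div_self h0 (haT n), one_smul]
  have hνsplit : ∀ n, νd n + νr n = ν.restrict (I n) := by
    intro n
    by_cases h0 : b n = 0
    · have hres : ν.restrict (I n) = 0 := Measure.restrict_eq_zero.mpr h0
      simp [hνd, hνr, hres]
    · simp only [hνd, hνr, ← add_smul]
      rw [ENNReal.div_add_div_same, add_tsub_cancel_of_le (hbm n),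
        ENNReal.div_self h0 (hbT n), one_smul]
  have hμsum : Measure.sum μd + μrem = μ := by
    rw [hμrem, Measure.sum_add_sum, ← hμdecomp]
    exact congrArg Measure.sum (funext hμsplit)
  have hνsum : Measure.sum νd + νrem = ν := by
    rw [hνrem, Measure.sum_add_sum, ← hνdecomp]
    exact congrArg Measure.sum (funext hνsplit)
  -- masses of the remainder pieces
  have hμr_univ : ∀ n, μr n Set.univ = a n - m n := by
    intro n
    by_cases h0 : a n = 0
    · have h1 : m n = 0 := le_antisymm (h0 ▸ ham n) zero_le
      simp [hμr, h0, h1, Measure.restrict_eq_zero.mpr h0]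
    · simp only [hμr, Measure.smul_apply, smul_eq_mul, Measure.restrict_apply_univ]
      exact ENNReal.div_mul_cancel h0 (haT n)
  have hνr_univ : ∀ n, νr n Set.univ = b n - m n := by
    intro n
    by_cases h0 : b n = 0
    · have h1 : m n = 0 := le_antisymm (h0 ▸ hbm n) zero_le
      simp [hνr, h0, h1, Measure.restrict_eq_zero.mpr h0]
    · simp only [hνr, Measure.smul_apply, smul_eq_mul, Measure.restrict_apply_univ]
      exact ENNReal.div_mul_cancel h0 (hbT n)
  set s : ℝ≥0∞ := ∑' n, (a n - m n) with hs
  set s' : ℝ≥0∞ := ∑' n, (b n - m n) with hs'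
  have hatsum : ∑' n, a n = 1 := by
    rw [ha, ← measure_iUnion hdisj hImeas, hunion, measure_univ]
  have hbtsum : ∑' n, b n = 1 := by
    rw [hb, ← measure_iUnion hdisj hImeas, hunion, measure_univ]
  have hmsum_a : (∑' n, m n) + s = 1 := by
    rw [hs, ← ENNReal.tsum_add, ← hatsum]
    exact tsum_congr fun n => add_tsub_cancel_of_le (ham n)
  have hmsum_b : (∑' n, m n) + s' = 1 := by
    rw [hs', ← ENNReal.tsum_add, ← hbtsum]
    exact tsum_congr fun n => add_tsub_cancel_of_le (hbm n)
  have hmfin : (∑' n, m n) ≠ ∞ := by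
    intro h
    rw [h] at hmsum_a
    simp at hmsum_a
  have hss' : s = s' := (ENNReal.add_right_inj hmfin).mp (hmsum_a.trans hmsum_b.symm)
  have hsle1 : s ≤ 1 := hmsum_a ▸ le_add_self
  have hsfin : s ≠ ∞ := ne_top_of_le_ne_top ENNReal.one_ne_top hsle1
  have hμrem_univ : μrem Set.univ = s := by
    rw [hμrem, Measure.sum_apply _ MeasurableSet.univ, hs]
    exact tsum_congr hμr_univ
  have hνrem_univ : νrem Set.univ = s := by
    rw [hνrem, Measure.sum_apply _ MeasurableSet.univ, hss', hs']
    exact tsum_congr hνr_univ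
  haveI : IsFiniteMeasure μrem := ⟨by rw [hμrem_univ]; exact hsfin.lt_top⟩
  haveI : IsFiniteMeasure νrem := ⟨by rw [hνrem_univ]; exact hsfin.lt_top⟩
  -- the coupling
  set c : ℤ → ℝ≥0∞ := fun n => m n / (a n * b n) with hc
  set γd : Measure (ℝ × ℝ) :=
    Measure.sum (fun n => c n • ((μ.restrict (I n)).prod (ν.restrict (I n)))) with hγd
  set γ : Measure (ℝ × ℝ) := γd + s⁻¹ • (μrem.prod νrem) with hγ
  -- scalar identities
  have hcb : ∀ n, c n * b n = m n / a n := by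
    intro n
    by_cases h0 : b n = 0
    · have h1 : m n = 0 := le_antisymm (h0 ▸ hbm n) zero_le
      simp [hc, h0, h1]
    · have h1 : c n = (m n / a n) / b n := by
        rw [hc]
        simp only [div_eq_mul_inv]
        rw [ENNReal.mul_inv (Or.inr (hbT n)) (Or.inl (haT n)), mul_assoc]
      rw [h1, ENNReal.div_mul_cancel h0 (hbT n)]
  have hca : ∀ n, c n * a n = m n / b n := by
    intro n
    by_cases h0 : a n = 0
    · have h1 : m n = 0 := le_antisymm (h0 ▸ ham n) zero_le
      simp [hc, h0, h1]
    · have h1 : c n = (m n / b n) / a n := by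
        simp only [hc]
        rw [mul_comm (a n) (b n)]
        simp only [div_eq_mul_inv]
        rw [ENNReal.mul_inv (Or.inr (haT n)) (Or.inl (hbT n)), mul_assoc]
      rw [h1, ENNReal.div_mul_cancel h0 (haT n)]
  -- first marginal
  have hmapfst_d : γd.map Prod.fst = Measure.sum μd := by
    rw [hγd, Measure.map_sum measurable_fst.aemeasurable]
    refine congrArg Measure.sum (funext fun n => ?_)
    rw [Measure.map_smul, Measure.map_fst_prod, Measure.restrict_apply_univ, smul_smul]
    simp only [hμd]
    rw [hcb n]
  have hmapsnd_d : γd.map Prod.snd = Measure.sum νd := by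
    rw [hγd, Measure.map_sum measurable_snd.aemeasurable]
    refine congrArg Measure.sum (funext fun n => ?_)
    rw [Measure.map_smul, Measure.map_snd_prod, Measure.restrict_apply_univ, smul_smul]
    simp only [hνd]
    rw [hca n]
  have hremfix_μ : (s⁻¹ * s) • μrem = μrem := by
    by_cases h0 : s = 0
    · have hz : μrem = 0 := by
        apply Measure.measure_univ_eq_zero.mp
        rw [hμrem_univ, h0]
      simp [hz]
    · rw [ENNReal.inv_mul_cancel h0 hsfin, one_smul]
  have hremfix_ν : (s⁻¹ * s) • νrem = νrem := by
    by_cases h0 : s = 0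
    · have hz : νrem = 0 := by
        apply Measure.measure_univ_eq_zero.mp
        rw [hνrem_univ, h0]
      simp [hz]
    · rw [ENNReal.inv_mul_cancel h0 hsfin, one_smul]
  have hmapfst : γ.map Prod.fst = μ := by
    rw [hγ, Measure.map_add _ _ measurable_fst, hmapfst_d, Measure.map_smul,
      Measure.map_fst_prod, hνrem_univ, smul_smul, hremfix_μ, hμsum]
  have hmapsnd : γ.map Prod.snd = ν := by
    rw [hγ, Measure.map_add _ _ measurable_snd, hmapsnd_d, Measure.map_smul,
      Measure.map_snd_prod, hμrem_univ, smul_smul, hremfix_ν, hνsum]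
  have hγuniv : γ Set.univ = 1 := by
    have h1 := congrArg (fun ρ : Measure ℝ => ρ Set.univ) hmapfst
    simpa [Measure.map_apply measurable_fst MeasurableSet.univ] using h1
  -- the bad set
  set bad : Set (ℝ × ℝ) := {p | ε ≤ |p.1 - p.2|} with hbad
  have hbadmeas : MeasurableSet bad :=
    measurableSet_le measurable_const ((measurable_fst.sub measurable_snd).abs)
  have hbad_d : γd bad = 0 := by
    rw [hγd, Measure.sum_apply _ hbadmeas]
    refine ENNReal.tsum_eq_zero.mpr fun n => ?_
    rw [Measure.smul_apply, Measure.prod_restrict, Measure.restrict_apply hbadmeas]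
    have hempty : bad ∩ (I n ×ˢ I n) = ∅ := by
      apply Set.eq_empty_iff_forall_notMem.mpr
      rintro ⟨x, y⟩ ⟨habs, hx, hy⟩
      simp only [hbad, Set.mem_setOf_eq] at habs
      simp only [hI, Set.mem_Ico] at hx hy
      have h5 : ((n : ℝ) + 1) * ε = (n : ℝ) * ε + ε := by ring
      rw [h5] at hx hy
      rcases abs_cases (x - y) with ⟨he, _⟩ | ⟨he, _⟩ <;> rw [he] at habs <;>
        linarith [hx.1, hx.2, hy.1, hy.2]
    rw [hempty]
    simp
  have hbad_γ : γ bad ≤ s := by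
    rw [hγ, Measure.add_apply, hbad_d, zero_add, Measure.smul_apply, smul_eq_mul]
    calc s⁻¹ * (μrem.prod νrem) bad
        ≤ s⁻¹ * (μrem.prod νrem) Set.univ :=
          by gcongr; exact Set.subset_univ _
      _ = s⁻¹ * (s * s) := by
          rw [← Set.univ_prod_univ, Measure.prod_prod, hμrem_univ, hνrem_univ]
      _ ≤ s := by
          rcases eq_or_ne s 0 with h | h
          · simp [h]
          · rw [← mul_assoc, ENNReal.inv_mul_cancel h hsfin, one_mul]
  -- the real-valued bound
  have key : ∀ n : ℤ, |(a n).toReal - (b n).toReal| = ((a n - m n) + (b n - m n)).toReal := by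
    intro n
    rcases le_total (a n) (b n) with h | h
    · have hmn : m n = a n := min_eq_left h
      rw [hmn, tsub_self, zero_add, ENNReal.toReal_sub_of_le h (hbT n), abs_sub_comm,
        abs_of_nonneg (sub_nonneg.mpr (ENNReal.toReal_mono (hbT n) h))]
    · have hmn : m n = b n := min_eq_right h
      rw [hmn, tsub_self, add_zero, ENNReal.toReal_sub_of_le h (haT n),
        abs_of_nonneg (sub_nonneg.mpr (ENNReal.toReal_mono (haT n) h))]
  have hterm_fin : ∀ n : ℤ, (a n - m n) + (b n - m n) ≠ ∞ := fun n =>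
    ENNReal.add_ne_top.mpr ⟨ne_top_of_le_ne_top (haT n) tsub_le_self,
      ne_top_of_le_ne_top (hbT n) tsub_le_self⟩
  have hRHS : ∑' n : ℤ, |(a n).toReal - (b n).toReal| = (2 * s).toReal := by
    calc ∑' n : ℤ, |(a n).toReal - (b n).toReal|
        = ∑' n : ℤ, ((a n - m n) + (b n - m n)).toReal := tsum_congr key
      _ = (∑' n : ℤ, ((a n - m n) + (b n - m n))).toReal :=
          (ENNReal.tsum_toReal_eq hterm_fin).symm
      _ = (s + s').toReal := by rw [ENNReal.tsum_add]
      _ = (2 * s).toReal := by rw [← hss', two_mul]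
  have final : (γ bad).toReal ≤ 1 / 2 * ∑' n : ℤ, |(a n).toReal - (b n).toReal| := by
    rw [hRHS, ENNReal.toReal_mul]
    have h2 : ((2 : ℝ≥0∞)).toReal = 2 := by norm_num
    rw [h2]
    have h3 : (γ bad).toReal ≤ s.toReal := ENNReal.toReal_mono hsfin hbad_γ
    linarith
  refine ⟨γ, ⟨hγuniv⟩, hmapfst, hmapsnd, ?_⟩
  simpa only [hbad, ha, hb, hI] using final
end

section
/- Let X be a nonempty set, F : X → X a map, λ > 1, M > 0, and let a : X → ℝ satisfy a(p) ≥ λ for all p, and b : X → ℝ satisfy |b(p)| ≤ M for all p. Then the series s(p) = −Σ_{k=0}^∞ b(F^k(p)) / Π_{j=0}^{k} a(F^j(p)) converges absolutely for every p, satisfies |s(p)| ≤ M/(λ−1), and s is the unique bounded function X → ℝ satisfying the invariance equation s(p) = (s(F(p)) − b(p))/a(p) for all p ∈ X. -/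
/-- The series `s(p) = -∑ₖ b(Fᵏp) / ∏_{j≤k} a(Fʲp)` converges absolutely, is bounded by
`M/(λ-1)`, and is the unique bounded solution of the invariance equation
`s(p) = (s(F p) - b(p))/a(p)`. -/
theorem central_slope_series
    {X : Type*} [Nonempty X] (F : X → X) (lam M : ℝ) (hlam : 1 < lam) (hM : 0 < M)
    (a b : X → ℝ) (ha : ∀ p, lam ≤ a p) (hb : ∀ p, |b p| ≤ M)
    (S : X → ℝ)
    (hS : ∀ p, S p = -∑' k : ℕ, b (F^[k] p) / ∏ j ∈ Finset.range (k + 1), a (F^[j] p)) :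
    (∀ p, Summable (fun k : ℕ =>
      |b (F^[k] p) / ∏ j ∈ Finset.range (k + 1), a (F^[j] p)|)) ∧
    (∀ p, |S p| ≤ M / (lam - 1)) ∧
    (∀ p, S p = (S (F p) - b p) / a p) ∧
    (∀ S' : X → ℝ, (∃ C : ℝ, ∀ p, |S' p| ≤ C) →
      (∀ p, S' p = (S' (F p) - b p) / a p) → S' = S) := by
  have hlam0 : (0:ℝ) < lam := lt_trans one_pos hlam
  have ha0 : ∀ p, (0:ℝ) < a p := fun p => lt_of_lt_of_le hlam0 (ha p)
  -- product lower bound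
  have hprod : ∀ p (k : ℕ), lam ^ (k+1) ≤ ∏ j ∈ Finset.range (k + 1), a (F^[j] p) := by
    intro p k
    calc lam ^ (k+1) = ∏ _j ∈ Finset.range (k+1), lam := by
          simp [Finset.prod_const]
      _ ≤ ∏ j ∈ Finset.range (k + 1), a (F^[j] p) := by
          apply Finset.prod_le_prod (fun i _ => le_of_lt hlam0) (fun i _ => ha _)
  have hprodpos : ∀ p (k : ℕ), (0:ℝ) < ∏ j ∈ Finset.range (k + 1), a (F^[j] p) :=
    fun p k => lt_of_lt_of_le (pow_pos hlam0 _) (hprod p k)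
  -- term bound
  have hterm : ∀ p (k : ℕ),
      |b (F^[k] p) / ∏ j ∈ Finset.range (k + 1), a (F^[j] p)| ≤ M * (1/lam) ^ (k+1) := by
    intro p k
    rw [abs_div, abs_of_pos (hprodpos p k)]
    rw [div_le_iff₀ (hprodpos p k)]
    calc |b (F^[k] p)| ≤ M := hb _
      _ = M * (1/lam)^(k+1) * lam^(k+1) := by
          field_simp
          rw [← mul_pow, one_div_mul_cancel hlam0.ne', one_pow]
      _ ≤ M * (1/lam)^(k+1) * ∏ j ∈ Finset.range (k + 1), a (F^[j] p) := by
          apply mul_le_mul_of_nonneg_left (hprod p k)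
          positivity
  have hgeo : Summable (fun k : ℕ => M * (1/lam) ^ (k+1)) := by
    apply Summable.mul_left
    exact ((summable_geometric_of_lt_one (by positivity)
      (by rw [div_lt_one hlam0]; exact hlam)).comp_injective (add_left_injective 1))
  have hsumm : ∀ p, Summable (fun k : ℕ =>
      |b (F^[k] p) / ∏ j ∈ Finset.range (k + 1), a (F^[j] p)|) := by
    intro p
    exact Summable.of_nonneg_of_le (fun k => abs_nonneg _) (hterm p) hgeo
  have hsumm' : ∀ p, Summable (fun k : ℕ =>
      b (F^[k] p) / ∏ j ∈ Finset.range (k + 1), a (F^[j] p)) :=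
    fun p => (hsumm p).of_abs
  -- geometric sum value
  have hgeosum : ∑' k : ℕ, M * (1/lam) ^ (k+1) = M / (lam - 1) := by
    have h1 : (1/lam) < 1 := by rw [div_lt_one hlam0]; exact hlam
    rw [tsum_mul_left]
    have : ∑' k : ℕ, (1/lam) ^ (k+1) = (1/lam) * ∑' k : ℕ, (1/lam) ^ k := by
      rw [← tsum_mul_left]
      congr 1; ext k; rw [pow_succ']
    rw [this, tsum_geometric_of_lt_one (by positivity) h1]
    field_simp
  -- bound on S
  have hbound : ∀ p, |S p| ≤ M / (lam - 1) := by
    intro p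
    rw [hS p, abs_neg]
    calc |∑' k : ℕ, b (F^[k] p) / ∏ j ∈ Finset.range (k + 1), a (F^[j] p)|
        ≤ ∑' k : ℕ, |b (F^[k] p) / ∏ j ∈ Finset.range (k + 1), a (F^[j] p)| :=
          by
            rw [← Real.norm_eq_abs]
            refine (norm_tsum_le_tsum_norm ?_).trans_eq ?_
            · simpa only [Real.norm_eq_abs] using hsumm p
            · simp only [Real.norm_eq_abs]
      _ ≤ ∑' k : ℕ, M * (1/lam) ^ (k+1) :=
          Summable.tsum_le_tsum (hterm p) (hsumm p) hgeo
      _ = M / (lam - 1) := hgeosum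
  -- invariance equation
  have hinv : ∀ p, S p = (S (F p) - b p) / a p := by
    intro p
    have hshift : ∀ k : ℕ,
        b (F^[k+1] p) / ∏ j ∈ Finset.range (k + 2), a (F^[j] p)
        = (b (F^[k] (F p)) / ∏ j ∈ Finset.range (k + 1), a (F^[j] (F p))) / a p := by
      intro k
      rw [Finset.prod_range_succ']
      simp only [Function.iterate_succ_apply, Function.iterate_zero_apply]
      rw [div_div]
    have h0 : ∑' k : ℕ, b (F^[k] p) / ∏ j ∈ Finset.range (k + 1), a (F^[j] p)
        = b p / a p + ∑' k : ℕ,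
          (b (F^[k] (F p)) / ∏ j ∈ Finset.range (k + 1), a (F^[j] (F p))) / a p := by
      rw [Summable.tsum_eq_zero_add (hsumm' p)]
      congr 1
      · simp
      · exact tsum_congr hshift
    rw [hS p, hS (F p), h0, tsum_div_const]
    field_simp
    ring
  refine ⟨hsumm, hbound, hinv, ?_⟩
  -- uniqueness
  rintro S' ⟨C, hC⟩ hS'
  set D : X → ℝ := fun p => S' p - S p with hD
  have hK : ∀ p, |D p| ≤ C + M / (lam - 1) := by
    intro p
    calc |D p| ≤ |S' p| + |S p| := abs_sub _ _
      _ ≤ C + M / (lam - 1) := add_le_add (hC p) (hbound p)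
  have hDrec : ∀ p, D p = D (F p) / a p := by
    intro p
    simp only [hD, hS' p, hinv p]
    rw [div_sub_div_same]
    ring_nf
  have hiter : ∀ (n : ℕ) (p : X), |D p| ≤ (C + M/(lam-1)) / lam ^ n := by
    intro n
    induction n with
    | zero => intro p; simpa using hK p
    | succ n ih =>
      intro p
      rw [hDrec p, abs_div, abs_of_pos (ha0 p)]
      have h0 : (0:ℝ) ≤ C + M/(lam-1) := le_trans (abs_nonneg _) (hK p)
      calc |D (F p)| / a p ≤ ((C + M/(lam-1)) / lam ^ n) / lam :=
            div_le_div₀ (by positivity) (ih (F p)) hlam0 (ha p)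
        _ = (C + M/(lam-1)) / lam ^ (n+1) := by
            rw [div_div, ← pow_succ]
  have hzero : ∀ p, D p = 0 := by
    intro p
    have htend : Filter.Tendsto (fun n : ℕ => (C + M/(lam-1)) / lam ^ n)
        Filter.atTop (nhds 0) := by
      simp only [div_eq_mul_inv, ← inv_pow]
      rw [show (0:ℝ) = (C + M/(lam-1)) * 0 by ring]
      exact Filter.Tendsto.const_mul _ (tendsto_pow_atTop_nhds_zero_of_lt_one
        (by positivity) (by rw [inv_lt_one_iff₀]; right; exact hlam))
    have : |D p| ≤ 0 := ge_of_tendsto' htend (fun n => hiter n p)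
    exact abs_nonpos_iff.mp this
  funext p
  have := hzero p
  simp only [hD] at this
  linarith
end
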